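/- arXiv:1208.5151 — 9 statements merged into one kernel-verified Lean document; each statement's English description precedes it below -/
import Mathlib

section
/- The sequence n ↦ |B_{2n}|^(1/n) is strictly increasing for all n ≥ 1, where B_k denotes the k-th Bernoulli number. -/
open Real Nat

noncomputable def Zf (k : ℕ) : ℝ := ∑' n : ℕ, 1 / (n : ℝ) ^ (2 * k)

lemma Zf_hasSum {k : ℕ} (hk : k ≠ 0) :
    HasSum (fun n : ℕ => 1 / (n : ℝ) ^ (2 * k)) (Zf k) :=
  (hasSum_zeta_nat hk).summable.hasSum

lemma Zf_gt_one {k : ℕ} (hk : 1 ≤ k) : 1 < Zf k := by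
  have h := Zf_hasSum (by omega : k ≠ 0)
  have h2 : ∑ n ∈ ({1, 2} : Finset ℕ), 1 / (n : ℝ) ^ (2 * k) ≤ Zf k :=
    sum_le_hasSum _ (fun i _ => by positivity) h
  have h3 : (1 : ℝ) + 1 / 2 ^ (2 * k) ≤ Zf k := by
    simpa using h2
  have : (0:ℝ) < 1 / 2 ^ (2*k) := by positivity
  linarith

lemma Zf_pos {k : ℕ} (hk : 1 ≤ k) : 0 < Zf k := lt_trans one_pos (Zf_gt_one hk)

lemma Zf_lt {k : ℕ} (hk : 1 ≤ k) : Zf k < 5 / 3 := by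
  have h1 : Zf k ≤ π ^ 2 / 6 := by
    refine hasSum_le (fun n => ?_) (Zf_hasSum (by omega)) hasSum_zeta_two
    rcases Nat.eq_zero_or_pos n with rfl | hn
    · norm_num [zero_pow (by omega : 2 * k ≠ 0)]
    · apply one_div_le_one_div_of_le (by positivity)
      exact pow_le_pow_right₀ (by exact_mod_cast hn) (by omega)
  nlinarith [pi_lt_d2, pi_pos]

lemma absB {k : ℕ} (hk : 1 ≤ k) :
    |((bernoulli (2 * k) : ℚ) : ℝ)| = 2 * (2 * k)! * Zf k / (2 * π) ^ (2 * k) := by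
  have hZ : Zf k = (-1 : ℝ) ^ (k + 1) * (2 : ℝ) ^ (2 * k - 1) * π ^ (2 * k) *
      (bernoulli (2 * k) : ℚ) / (2 * k)! := (hasSum_zeta_nat (by omega)).tsum_eq
  have e := congrArg abs hZ
  rw [abs_of_pos (Zf_pos hk)] at e
  rw [abs_div, abs_mul, abs_mul, abs_mul, abs_pow, abs_pow, abs_pow, abs_neg, abs_one,
    one_pow, one_mul, abs_of_nonneg pi_pos.le, abs_of_nonneg (by norm_num : (0:ℝ) ≤ 2),
    abs_of_nonneg (by positivity : (0:ℝ) ≤ ((2*k)! : ℝ))] at e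
  have h2 : (2 : ℝ) ^ (2 * k) = 2 * 2 ^ (2 * k - 1) := by
    conv_lhs => rw [show 2 * k = (2 * k - 1) + 1 from by omega]
    rw [pow_succ]; ring
  rw [mul_pow, h2]
  rw [e]
  have : ((2*k)! : ℝ) ≠ 0 := by positivity
  have hπ : π ≠ 0 := pi_ne_zero
  field_simp

lemma two_mul_pow_le {n : ℕ} (hn : 1 ≤ n) : 2 * (n : ℝ) ^ n ≤ ((n : ℝ) + 1) ^ n := by
  have hn' : (0:ℝ) < n := by exact_mod_cast hn
  have h1 : (2:ℝ) ≤ (1 + 1 / n) ^ n := by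
    have := one_add_mul_le_pow (a := 1/(n:ℝ)) (le_trans (by norm_num : (-2:ℝ) ≤ 0) (by positivity)) n
    rw [mul_one_div, div_self hn'.ne'] at this
    linarith
  calc 2 * (n:ℝ) ^ n ≤ (1 + 1/n) ^ n * (n:ℝ) ^ n := by
        have : (0:ℝ) < (n:ℝ)^n := by positivity
        nlinarith
    _ = ((1 + 1/n) * n) ^ n := (mul_pow _ _ _).symm
    _ = ((n:ℝ) + 1) ^ n := by rw [show (1 + 1/(n:ℝ)) * n = n + 1 by field_simp]

lemma A2 {n : ℕ} (hn : 1 ≤ n) : (4 * (n:ℝ) + 4) * (n:ℝ) ^ n ≤ ((n:ℝ) + 2) ^ (n + 1) := by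
  have hB : 2 * (n : ℝ) ^ n ≤ ((n : ℝ) + 1) ^ n := two_mul_pow_le hn
  have hA : 2 * ((n : ℝ) + 1) ^ (n+1) ≤ ((n : ℝ) + 2) ^ (n+1) := by
    have := two_mul_pow_le (n := n + 1) (by omega)
    push_cast at this
    convert this using 2 <;> ring
  have h1 : ((n:ℝ)+1) ^ (n+1) = ((n:ℝ)+1) ^ n * ((n:ℝ)+1) := pow_succ _ _
  have hp : (0:ℝ) ≤ (n:ℝ) + 1 := by positivity
  nlinarith [pow_nonneg (by positivity : (0:ℝ) ≤ (n:ℝ)) n]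

lemma A1 {n : ℕ} (hn : 1 ≤ n) : ((2 * n)! : ℝ) ≤ ((n:ℝ) * ((n:ℝ) + 1)) ^ n := by
  induction n with
  | zero => omega
  | succ m ih =>
    rcases Nat.eq_zero_or_pos m with rfl | hm
    · norm_num [Nat.factorial]
    have ihm := ih hm
    have hfact : ((2 * (m+1))! : ℝ) = (2*(m:ℝ)+2) * (2*(m:ℝ)+1) * ((2*m)! : ℝ) := by
      have : 2 * (m + 1) = (2 * m + 1) + 1 := by omega
      rw [this, Nat.factorial_succ, Nat.factorial_succ]
      push_cast
      ring
    have h2 : ((2*(m:ℝ))+2) * (2*(m:ℝ)+1) * ((2*m)! : ℝ)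
        ≤ (2*(m:ℝ)+2) * (2*(m:ℝ)+1) * ((m:ℝ) * ((m:ℝ)+1)) ^ m := by
      apply mul_le_mul_of_nonneg_left ihm
      positivity
    have hA2 : (4 * (m:ℝ) + 4) * (m:ℝ) ^ m ≤ ((m:ℝ) + 2) ^ (m + 1) := A2 hm
    have key : (2*(m:ℝ)+2) * (2*(m:ℝ)+1) * ((m:ℝ) * ((m:ℝ)+1)) ^ m
        ≤ (((m:ℝ)+1) * ((m:ℝ)+2)) ^ (m+1) := by
      have e1 : ((m:ℝ) * ((m:ℝ)+1)) ^ m = (m:ℝ)^m * ((m:ℝ)+1)^m := mul_pow _ _ _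
      have e2 : (((m:ℝ)+1) * ((m:ℝ)+2)) ^ (m+1) = ((m:ℝ)+1)^(m+1) * ((m:ℝ)+2)^(m+1) :=
        mul_pow _ _ _
      have e3 : ((m:ℝ)+1)^(m+1) = ((m:ℝ)+1)^m * ((m:ℝ)+1) := pow_succ _ _
      have hpm : (0:ℝ) ≤ ((m:ℝ)+1)^m := by positivity
      have step : (2*(m:ℝ)+2) * (2*(m:ℝ)+1) * ((m:ℝ)^m * ((m:ℝ)+1)^m)
          ≤ ((m:ℝ)+1)^m * ((m:ℝ)+1) * ((m:ℝ)+2)^(m+1) := by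
        have h4 : (2*(m:ℝ)+1) * 2 * (m:ℝ)^m ≤ (4*(m:ℝ)+4) * (m:ℝ)^m := by
          have : (0:ℝ) ≤ (m:ℝ)^m := by positivity
          nlinarith
        calc (2*(m:ℝ)+2) * (2*(m:ℝ)+1) * ((m:ℝ)^m * ((m:ℝ)+1)^m)
            = ((m:ℝ)+1) * ((m:ℝ)+1)^m * ((2*(m:ℝ)+1) * 2 * (m:ℝ)^m) := by ring
          _ ≤ ((m:ℝ)+1) * ((m:ℝ)+1)^m * ((4*(m:ℝ)+4) * (m:ℝ)^m) := by
              apply mul_le_mul_of_nonneg_left h4; positivity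
          _ ≤ ((m:ℝ)+1) * ((m:ℝ)+1)^m * ((m:ℝ)+2)^(m+1) := by
              apply mul_le_mul_of_nonneg_left hA2; positivity
          _ = ((m:ℝ)+1)^m * ((m:ℝ)+1) * ((m:ℝ)+2)^(m+1) := by ring
      rw [e1, e2, e3]
      exact step
    have : ((m:ℝ)+1) * ((m:ℝ)+1+1) = ((m:ℝ)+1) * ((m:ℝ)+2) := by ring
    push_cast
    rw [this]
    calc ((2 * (m+1))! : ℝ) = (2*(m:ℝ)+2) * (2*(m:ℝ)+1) * ((2*m)! : ℝ) := hfact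
      _ ≤ (2*(m:ℝ)+2) * (2*(m:ℝ)+1) * ((m:ℝ) * ((m:ℝ)+1)) ^ m := h2
      _ ≤ (((m:ℝ)+1) * ((m:ℝ)+2)) ^ (m+1) := key

lemma A3 {n : ℕ} (hn : 2 ≤ n) : 2 * (5/3 : ℝ) ^ (n+1) ≤ 4 ^ n := by
  induction n with
  | zero => omega
  | succ m ih =>
    rcases Nat.lt_or_ge m 2 with hm | hm
    · interval_cases m
      · omega
      · norm_num
    · have := ih hm
      have : 2 * (5/3 : ℝ) ^ (m+2) = (5/3) * (2 * (5/3)^(m+1)) := by ring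
      rw [this]
      calc (5/3 : ℝ) * (2 * (5/3)^(m+1)) ≤ (5/3) * 4^m := by
            apply mul_le_mul_of_nonneg_left (ih hm); norm_num
        _ ≤ 4 * 4 ^ m := by
            apply mul_le_mul_of_nonneg_right (by norm_num) (by positivity)
        _ = 4 ^ (m+1) := (pow_succ' 4 m).symm

lemma keyfact {n : ℕ} (hn : 1 ≤ n) :
    2 * (5/3 : ℝ) ^ (n+1) * ((2*n)! : ℝ) < ((2*(n:ℝ)+1) * (2*(n:ℝ)+2)) ^ n := by
  rcases Nat.lt_or_ge n 2 with h2 | h2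
  · interval_cases n
    norm_num [Nat.factorial]
  · have h1 : ((2*n)! : ℝ) ≤ ((n:ℝ) * ((n:ℝ)+1)) ^ n := A1 hn
    have h3 : 2 * (5/3 : ℝ) ^ (n+1) ≤ 4 ^ n := A3 h2
    have hp : (0:ℝ) < 2 * (5/3 : ℝ) ^ (n+1) := by positivity
    calc 2 * (5/3 : ℝ) ^ (n+1) * ((2*n)! : ℝ)
        ≤ 2 * (5/3 : ℝ) ^ (n+1) * ((n:ℝ) * ((n:ℝ)+1)) ^ n :=
          mul_le_mul_of_nonneg_left h1 hp.le
      _ ≤ 4 ^ n * ((n:ℝ) * ((n:ℝ)+1)) ^ n :=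
          mul_le_mul_of_nonneg_right h3 (by positivity)
      _ = (4 * ((n:ℝ) * ((n:ℝ)+1))) ^ n := (mul_pow _ _ _).symm
      _ < ((2*(n:ℝ)+1) * (2*(n:ℝ)+2)) ^ n := by
          apply pow_lt_pow_left₀ _ (by positivity) (by omega)
          have : (1:ℝ) ≤ (n:ℝ) := by exact_mod_cast hn
          nlinarith

lemma adjacent {n : ℕ} (hn : 1 ≤ n) :
    |((bernoulli (2 * n) : ℚ) : ℝ)| ^ ((n : ℝ)⁻¹)
      < |((bernoulli (2 * (n+1)) : ℚ) : ℝ)| ^ (((n:ℝ) + 1)⁻¹) := by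
  have hn' : (0:ℝ) < n := by exact_mod_cast hn
  set a := |((bernoulli (2 * n) : ℚ) : ℝ)| with ha_def
  set b := |((bernoulli (2 * (n+1)) : ℚ) : ℝ)| with hb_def
  have hZn := Zf_pos hn
  have hZn1 := Zf_pos (by omega : 1 ≤ n + 1)
  have ha : a = 2 * (2*n)! * Zf n / (2*π)^(2*n) := absB hn
  have hb : b = 2 * (2*(n+1))! * Zf (n+1) / (2*π)^(2*(n+1)) := absB (by omega)
  have hfp : (0:ℝ) < ((2*n)! : ℝ) := by positivity
  have hfp1 : (0:ℝ) < ((2*(n+1))! : ℝ) := by positivity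
  have hπ : (0:ℝ) < 2*π := by positivity
  have hapos : 0 < a := by
    rw [ha]
    exact div_pos (by positivity) (by positivity)
  have hbpos : 0 < b := by
    rw [hb]
    exact div_pos (by positivity) (by positivity)
  -- key numerator inequality
  have hnum : (2 * ((2*n)! : ℝ) * Zf n) ^ (n+1) < (2 * ((2*(n+1))! : ℝ) * Zf (n+1)) ^ n := by
    have hfact : ((2*(n+1))! : ℝ) = ((2*n)! : ℝ) * ((2*(n:ℝ)+1) * (2*(n:ℝ)+2)) := by
      have : 2 * (n + 1) = (2 * n + 1) + 1 := by omega
      rw [this, Nat.factorial_succ, Nat.factorial_succ]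
      push_cast; ring
    have step1 : (2 * ((2*n)! : ℝ) * Zf n) ^ (n+1) < (2 * ((2*n)! : ℝ) * (5/3)) ^ (n+1) := by
      apply pow_lt_pow_left₀ _ (by positivity) (by omega)
      have := Zf_lt hn
      nlinarith
    have step2 : (2 * ((2*n)! : ℝ) * (5/3)) ^ (n+1)
        < 2 ^ n * (((2*n)! : ℝ) * ((2*(n:ℝ)+1) * (2*(n:ℝ)+2))) ^ n := by
      have e1 : (2 * ((2*n)! : ℝ) * (5/3)) ^ (n+1)
          = 2 ^ n * ((2 * (5/3:ℝ)^(n+1) * ((2*n)! : ℝ)) * ((2*n)! : ℝ)^n) := by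
        rw [mul_pow, mul_pow, pow_succ]
        ring
      have e2 : 2 ^ n * (((2*n)! : ℝ) * ((2*(n:ℝ)+1) * (2*(n:ℝ)+2))) ^ n
          = 2 ^ n * (((2*(n:ℝ)+1) * (2*(n:ℝ)+2))^n * ((2*n)! : ℝ)^n) := by
        rw [mul_pow]; ring
      rw [e1, e2]
      apply mul_lt_mul_of_pos_left _ (by positivity : (0:ℝ) < 2^n)
      exact mul_lt_mul_of_pos_right (keyfact hn) (by positivity)
    have step3 : 2 ^ n * (((2*n)! : ℝ) * ((2*(n:ℝ)+1) * (2*(n:ℝ)+2))) ^ n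
        ≤ (2 * ((2*(n+1))! : ℝ) * Zf (n+1)) ^ n := by
      have h1 : 1 ≤ Zf (n+1) := (Zf_gt_one (by omega)).le
      rw [← mul_pow]
      have hbase : 2 * (((2*n)! : ℝ) * ((2*(n:ℝ)+1) * (2*(n:ℝ)+2)))
          ≤ 2 * ((2*(n+1))! : ℝ) * Zf (n+1) := by
        rw [hfact]
        nlinarith [mul_pos hfp (by nlinarith : (0:ℝ) < (2*(n:ℝ)+1) * (2*(n:ℝ)+2))]
      exact pow_le_pow_left₀ (by positivity) hbase n
    calc (2 * ((2*n)! : ℝ) * Zf n) ^ (n+1)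
        < (2 * ((2*n)! : ℝ) * (5/3)) ^ (n+1) := step1
      _ < 2 ^ n * (((2*n)! : ℝ) * ((2*(n:ℝ)+1) * (2*(n:ℝ)+2))) ^ n := step2
      _ ≤ (2 * ((2*(n+1))! : ℝ) * Zf (n+1)) ^ n := step3
  have hab : a ^ (n+1) < b ^ n := by
    rw [ha, hb, div_pow, div_pow, ← pow_mul, ← pow_mul]
    have : 2 * n * (n + 1) = 2 * (n + 1) * n := by ring
    rw [this]
    exact (div_lt_div_iff_of_pos_right (by positivity)).mpr hnum
  -- pass to rpow
  have hmain : (a ^ (n+1) : ℝ) ^ (((n:ℝ) * ((n:ℝ)+1))⁻¹)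
      < (b ^ n : ℝ) ^ (((n:ℝ) * ((n:ℝ)+1))⁻¹) :=
    Real.rpow_lt_rpow (by positivity) hab (by positivity)
  have e1 : (a ^ (n+1) : ℝ) ^ (((n:ℝ) * ((n:ℝ)+1))⁻¹) = a ^ ((n:ℝ)⁻¹) := by
    rw [← Real.rpow_natCast a (n+1), ← Real.rpow_mul hapos.le]
    congr 1
    have h0 : (n:ℝ) ≠ 0 := hn'.ne'
    have h1 : (n:ℝ) + 1 ≠ 0 := by positivity
    push_cast
    field_simp
    try ring
  have e2 : (b ^ n : ℝ) ^ (((n:ℝ) * ((n:ℝ)+1))⁻¹) = b ^ (((n:ℝ)+1)⁻¹) := by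
    rw [← Real.rpow_natCast b n, ← Real.rpow_mul hbpos.le]
    congr 1
    have h0 : (n:ℝ) ≠ 0 := hn'.ne'
    have h1 : (n:ℝ) + 1 ≠ 0 := by positivity
    push_cast
    field_simp
    try ring
  rw [e1, e2] at hmain
  exact hmain

theorem bernoulli_root_strictMono :
    StrictMonoOn (fun n : ℕ => |((bernoulli (2 * n) : ℚ) : ℝ)| ^ ((n : ℝ)⁻¹))
      {n : ℕ | 1 ≤ n} := by
  apply strictMonoOn_of_lt_add_one
  · exact Set.ordConnected_Ici
  · intro a _ ha _
    have h := adjacent ha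
    simpa using h
end

section
/- The sequence n ↦ |B_{2n+2}|^(1/(n+1)) / |B_{2n}|^(1/n) is strictly decreasing for all n ≥ 2, where B_k is the k-th Bernoulli number. -/
set_option maxHeartbeats 1000000
open Real Finset Nat

theorem b5 : bernoulli' 5 = 0 := by
  rw [bernoulli'_def]; norm_num [sum_range_succ, Nat.choose]
theorem b6 : bernoulli' 6 = 1/42 := by
  rw [bernoulli'_def]; norm_num [sum_range_succ, Nat.choose, b5]
theorem b7 : bernoulli' 7 = 0 := by
  rw [bernoulli'_def]; norm_num [sum_range_succ, Nat.choose, b5, b6]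
theorem b8 : bernoulli' 8 = -1/30 := by
  rw [bernoulli'_def]; norm_num [sum_range_succ, Nat.choose, b5, b6, b7]
theorem b10 : bernoulli' 10 = 5/66 := by
  have b9 : bernoulli' 9 = 0 := by
    rw [bernoulli'_def]; norm_num [sum_range_succ, Nat.choose, b5, b6, b7, b8]
  rw [bernoulli'_def]; norm_num [sum_range_succ, Nat.choose, b5, b6, b7, b8, b9]
theorem bern4 : bernoulli 4 = -1/30 := by rw [bernoulli_eq_bernoulli'_of_ne_one] <;> norm_num
theorem bern6 : bernoulli 6 = 1/42 := by rw [bernoulli_eq_bernoulli'_of_ne_one, b6]; norm_num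
theorem bern8 : bernoulli 8 = -1/30 := by rw [bernoulli_eq_bernoulli'_of_ne_one, b8]; norm_num
theorem bern10 : bernoulli 10 = 5/66 := by rw [bernoulli_eq_bernoulli'_of_ne_one, b10]; norm_num

open Real Finset Nat

noncomputable def Zr (k : ℕ) : ℝ := ∑' n : ℕ, 1 / (n : ℝ) ^ (2 * k)

lemma hasSum_Zr {k : ℕ} (hk : k ≠ 0) :
    HasSum (fun n : ℕ => 1 / (n : ℝ) ^ (2 * k)) (Zr k) :=
  (hasSum_zeta_nat hk).summable.hasSum

lemma one_le_Zr {k : ℕ} (hk : k ≠ 0) : 1 ≤ Zr k := by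
  have h := le_hasSum (hasSum_Zr hk) 1 (fun m _ => by positivity)
  simpa using h

lemma Zr_pos {k : ℕ} (hk : k ≠ 0) : 0 < Zr k := lt_of_lt_of_le one_pos (one_le_Zr hk)

lemma abs_bern_eq {k : ℕ} (hk : k ≠ 0) :
    |((bernoulli (2 * k) : ℚ) : ℝ)| = 2 * (2 * k)! * Zr k / (2 * π) ^ (2 * k) := by
  have h := ((hasSum_zeta_nat hk).unique (hasSum_Zr hk))
  have hfac : (0:ℝ) < (2 * k)! := by positivity
  have hpi : (0:ℝ) < π := pi_pos
  have h2 : (2:ℝ) ^ (2 * k - 1) = 2 ^ (2 * k) / 2 := by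
    rw [eq_div_iff (by norm_num), ← pow_succ]
    congr 1
    omega
  have habs : |(-1:ℝ) ^ (k + 1) * 2 ^ (2 * k - 1) * π ^ (2 * k) * (bernoulli (2 * k) : ℝ) / (2 * k)!|
      = Zr k := by
    rw [h]; exact abs_of_pos (Zr_pos hk)
  rw [abs_div, abs_mul, abs_mul, abs_mul] at habs
  rw [abs_of_pos hfac, abs_of_nonneg (by positivity : (0:ℝ) ≤ (2:ℝ)^(2*k-1)),
    abs_of_nonneg (by positivity : (0:ℝ) ≤ π^(2*k)), abs_pow, abs_neg, abs_one, one_pow, one_mul]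
    at habs
  rw [mul_pow, h2] at *
  field_simp at habs ⊢
  linarith [habs]



lemma abs_bern_pos {k : ℕ} (hk : k ≠ 0) : 0 < |((bernoulli (2 * k) : ℚ) : ℝ)| := by
  rw [abs_bern_eq hk]
  have := Zr_pos hk
  have := pi_pos
  positivity

lemma log_abs_bern {k : ℕ} (hk : k ≠ 0) :
    Real.log |((bernoulli (2 * k) : ℚ) : ℝ)| =
      Real.log 2 + Real.log (2 * k)! + Real.log (Zr k) - 2 * k * Real.log (2 * π) := by
  rw [abs_bern_eq hk]
  have h1 : (0:ℝ) < (2*k)! := by positivity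
  have h2 := Zr_pos hk
  have h3 : (0:ℝ) < 2 * π := by have := pi_pos; linarith
  rw [Real.log_div (by positivity) (by positivity), Real.log_mul (by positivity) (ne_of_gt h2),
    Real.log_mul (by norm_num) (ne_of_gt h1), Real.log_pow]
  push_cast
  ring

lemma Zr_anti {k : ℕ} (hk : k ≠ 0) : Zr (k + 2) ≤ Zr k := by
  refine Summable.tsum_le_tsum (fun m => ?_) (hasSum_Zr (by omega)).summable (hasSum_Zr hk).summable
  rcases Nat.eq_zero_or_pos m with h | h
  · subst h; simp [zero_pow, (by omega : 2*(k+2) ≠ 0), (by omega : 2*k ≠ 0)]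
  · have hm : (1:ℝ) ≤ (m:ℝ) := by exact_mod_cast h
    apply div_le_div_of_nonneg_left (by norm_num) (by positivity)
    exact pow_le_pow_right₀ hm (by omega)

lemma Zr_one : Zr 1 = π ^ 2 / 6 := by
  have h := hasSum_zeta_two
  have h2 := hasSum_Zr one_ne_zero
  simp only [mul_one] at h2
  exact h2.unique h

lemma Zr_split {k : ℕ} (hk : k ≠ 0) :
    Zr k = 1 + ∑' m : ℕ, 1 / ((m:ℝ) + 2) ^ (2 * k) := by
  have hs := (hasSum_Zr hk).summable
  have h := (Summable.sum_add_tsum_nat_add (f := fun n : ℕ => 1 / (n : ℝ) ^ (2 * k)) 2 hs).symm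
  rw [show Zr k = ∑' n : ℕ, 1 / (n : ℝ) ^ (2 * k) from rfl, h]
  rw [Finset.sum_range_succ, Finset.sum_range_one]
  push_cast
  norm_num [zero_pow, (by omega : 2*k ≠ 0)]
  omega

lemma Zr_tail {n : ℕ} (hn : 1 ≤ n) :
    Zr n ≤ 1 + (π ^ 2 / 6 - 1) / 4 ^ (n - 1) := by
  have hk : n ≠ 0 := by omega
  rw [Zr_split hk]
  have h1 : Zr 1 = 1 + ∑' m : ℕ, 1 / ((m:ℝ) + 2) ^ 2 := by
    have := Zr_split one_ne_zero
    norm_num at this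
    convert this using 3 with m
    norm_num
  have hT1 : ∑' m : ℕ, 1 / ((m:ℝ) + 2) ^ 2 = π ^ 2 / 6 - 1 := by
    rw [← Zr_one, h1]; ring
  have hsum1 : Summable (fun m : ℕ => 1 / ((m:ℝ) + 2) ^ 2) := by
    have := (hasSum_Zr one_ne_zero).summable
    have h2 := (summable_nat_add_iff (f := fun n : ℕ => 1 / (n : ℝ) ^ (2 * 1)) 2).mpr this
    simpa using h2
  have hsumn : Summable (fun m : ℕ => 1 / ((m:ℝ) + 2) ^ (2 * n)) := by
    have := (hasSum_Zr hk).summable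
    have h2 := (summable_nat_add_iff (f := fun j : ℕ => 1 / (j : ℝ) ^ (2 * n)) 2).mpr this
    simpa using h2
  have key : ∑' m : ℕ, 1 / ((m:ℝ) + 2) ^ (2 * n)
      ≤ ∑' m : ℕ, (1 / 4 ^ (n-1)) * (1 / ((m:ℝ) + 2) ^ 2) := by
    refine Summable.tsum_le_tsum (fun m => ?_) hsumn (hsum1.mul_left _)
    have hm2 : (2:ℝ) ≤ (m:ℝ) + 2 := by
      have : (0:ℝ) ≤ (m:ℝ) := Nat.cast_nonneg m
      linarith
    have hpos : (0:ℝ) < ((m:ℝ) + 2) ^ 2 := by positivity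
    rw [_root_.div_mul_div_comm, one_mul]
    apply one_div_le_one_div_of_le (by positivity)
    have e1 : ((m:ℝ)+2)^(2*n) = ((m:ℝ)+2)^(2*(n-1)) * ((m:ℝ)+2)^2 := by
      rw [← pow_add]; congr 1; omega
    have e2 : (4:ℝ)^(n-1) ≤ ((m:ℝ)+2)^(2*(n-1)) := by
      rw [pow_mul]
      exact pow_le_pow_left₀ (by norm_num) (by nlinarith) _
    rw [e1]
    exact mul_le_mul_of_nonneg_right e2 (le_of_lt hpos)
  rw [tsum_mul_left, hT1] at key
  have : (1:ℝ) / 4 ^ (n-1) * (π^2/6 - 1) = (π ^ 2 / 6 - 1) / 4 ^ (n - 1) := by ring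
  linarith [key, this ▸ key]

lemma log_Zr_le {n : ℕ} (hn : 1 ≤ n) :
    Real.log (Zr n) ≤ (2/3) / 4 ^ (n - 1) := by
  have h1 := Real.log_le_sub_one_of_pos (Zr_pos (by omega : n ≠ 0))
  have h2 := Zr_tail hn
  have hpi : π < 3.15 := by
    have := Real.pi_lt_d2
    linarith
  have hpi2 : π ^ 2 / 6 - 1 ≤ 2/3 := by nlinarith [pi_pos]
  have h4 : (0:ℝ) < 4 ^ (n-1) := by positivity
  calc Real.log (Zr n) ≤ (π ^ 2 / 6 - 1) / 4 ^ (n - 1) := by linarith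
    _ ≤ (2/3) / 4 ^ (n-1) := by gcongr

lemma log_fact_le {n : ℕ} (hn : 1 ≤ n) :
    Real.log (2 * n)! ≤ 1 - Real.log 2 / 2 + Real.log (4 * n) / 2
      + 2 * n * Real.log (2 * n) - 2 * n := by
  have h1 : Stirling.stirlingSeq (2 * n) ≤ Real.exp 1 / Real.sqrt 2 := by
    have := Stirling.stirlingSeq'_antitone (Nat.zero_le (2 * n - 1))
    simp only [Function.comp] at this
    rw [show (2*n - 1).succ = 2 * n by omega] at this
    simpa [Stirling.stirlingSeq_one] using this
  rw [Stirling.stirlingSeq] at h1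
  have hnpos : (0:ℝ) < ((2*n : ℕ):ℝ) := by positivity
  have hden : (0:ℝ) < Real.sqrt (2 * ((2*n:ℕ)) : ℝ) * (((2*n:ℕ) : ℝ) / Real.exp 1) ^ (2*n) := by
    have he := Real.exp_pos 1
    positivity
  rw [div_le_iff₀ hden] at h1
  have hfpos : (0:ℝ) < ((2*n)! : ℝ) := by positivity
  have hlog := Real.log_le_log hfpos h1
  rw [Real.log_mul (by positivity) (ne_of_gt hden),
      Real.log_mul (by positivity) (by positivity),
      Real.log_div (ne_of_gt (Real.exp_pos 1)) (by positivity),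
      Real.log_pow,
      Real.log_div (ne_of_gt hnpos) (ne_of_gt (Real.exp_pos 1)),
      Real.log_exp, Real.log_sqrt (by positivity),
      Real.log_sqrt (by norm_num)] at hlog
  have hc : ((2*n : ℕ):ℝ) = 2*(n:ℝ) := by push_cast; ring
  rw [hc] at hlog
  have h4 : Real.log (2 * (2 * (n:ℝ))) = Real.log (4 * n) := by ring_nf
  rw [h4] at hlog
  push_cast at hlog ⊢
  linarith


lemma fact_step (m : ℕ) :
    ((2 * (m + 1))! : ℝ) = ((2 * m)! : ℝ) * (2 * m + 1) * (2 * m + 2) := by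
  have : 2 * (m + 1) = (2 * m + 1) + 1 := by omega
  rw [this, Nat.factorial_succ, show 2*m+1 = (2*m)+1 from rfl, Nat.factorial_succ]
  push_cast
  ring

lemma pow_helper {n : ℕ} (hn : 4 ≤ n) : 5 * ((n:ℝ) + 1) ^ 2 ≤ 3 * 4 ^ (n - 1) := by
  have h : ∀ j : ℕ, 5 * (j + 5) ^ 2 ≤ 3 * 4 ^ (j + 3) := by
    intro j
    induction j with
    | zero => norm_num
    | succ k ih =>
      have e : k + 1 + 3 = (k + 3) + 1 := by omega
      have h2 : 5 * (k + 1 + 5) ^ 2 ≤ 4 * (5 * (k + 5) ^ 2) := by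
        have : (k+1+5)^2 ≤ 4 * (k+5)^2 := by
          have : k + 1 + 5 ≤ 2 * (k + 5) := by omega
          calc (k+1+5)^2 ≤ (2*(k+5))^2 := Nat.pow_le_pow_left this 2
            _ = 4 * (k+5)^2 := by ring
        omega
      have h3 : 4 * (5 * (k+5)^2) ≤ 4 * (3 * 4 ^ (k+3)) := by omega
      have h4 : 4 * (3 * 4^(k+3)) = 3 * 4 ^ ((k+3)+1) := by rw [pow_succ]; ring
      rw [e]
      exact le_trans h2 (h4 ▸ h3)
  obtain ⟨j, rfl⟩ : ∃ j, n = j + 4 := ⟨n - 4, by omega⟩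
  have hcast : ((5 * (j + 5) ^ 2 : ℕ) : ℝ) ≤ ((3 * 4 ^ (j + 3) : ℕ) : ℝ) := by exact_mod_cast h j
  have e1 : j + 4 - 1 = j + 3 := by omega
  rw [e1]
  push_cast at hcast ⊢
  nlinarith [hcast]

lemma key_large {n : ℕ} (hn : 4 ≤ n) :
    ((n:ℝ)+1) * ((n:ℝ)+2) * Real.log |((bernoulli (2*n) : ℚ) : ℝ)|
      + (n:ℝ) * ((n:ℝ)+1) * Real.log |((bernoulli (2*(n+2)) : ℚ) : ℝ)|
      < 2*(n:ℝ) * ((n:ℝ)+2) * Real.log |((bernoulli (2*(n+1)) : ℚ) : ℝ)| := by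
  have hn0 : n ≠ 0 := by omega
  have hn1 : (1:ℕ) ≤ n := by omega
  set x : ℝ := (n : ℝ) with hx
  have hx4 : (4:ℝ) ≤ x := by rw [hx]; exact_mod_cast hn
  have hxpos : (0:ℝ) < x := by linarith
  rw [log_abs_bern hn0, log_abs_bern (by omega : n + 1 ≠ 0), log_abs_bern (by omega : n + 2 ≠ 0)]
  -- expand factorials
  have hf1 : Real.log (2 * (n+1))! = Real.log (2*n)! + Real.log (2*x+1) + Real.log (2*x+2) := by
    rw [fact_step n, Real.log_mul (by positivity) (by positivity),
      Real.log_mul (by positivity) (by positivity)]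
  have hf2 : Real.log (2 * (n+2))! = Real.log (2*(n+1))! + Real.log (2*x+3) + Real.log (2*x+4) := by
    rw [show n + 2 = (n+1) + 1 from rfl, fact_step (n+1),
      Real.log_mul (by positivity) (by positivity),
      Real.log_mul (by positivity) (by positivity)]
    push_cast
    ring_nf
    rw [hx]
  rw [hf2, hf1]
  set f := Real.log (2*n)! with hfdef
  set a1 := Real.log (2*x+1)
  set a2 := Real.log (2*x+2)
  set a3 := Real.log (2*x+3)
  set a4 := Real.log (2*x+4)
  set g0 := Real.log (Zr n)
  set g1 := Real.log (Zr (n+1))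
  set g2 := Real.log (Zr (n+2))
  -- bound 1 : log Q - log P
  have hP : (0:ℝ) < (2*x+1) * (2*x+2) := by positivity
  have hQP : a3 + a4 - a1 - a2 ≤ (8*x+10) / ((2*x+1)*(2*x+2)) := by
    have h := Real.log_le_sub_one_of_pos
      (show (0:ℝ) < ((2*x+3)*(2*x+4)) / ((2*x+1)*(2*x+2)) by positivity)
    rw [Real.log_div (by positivity) (by positivity),
      Real.log_mul (by positivity) (by positivity),
      Real.log_mul (by positivity) (by positivity)] at h
    have : ((2*x+3)*(2*x+4)) / ((2*x+1)*(2*x+2)) - 1 = (8*x+10) / ((2*x+1)*(2*x+2)) := by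
      field_simp
      ring
    linarith [this ▸ h]
  have P1 : x*(x+1)*(a3 + a4 - a1 - a2) ≤ 2*x + 3/2 := by
    have h1 : x*(x+1)*(a3 + a4 - a1 - a2) ≤ x*(x+1)*((8*x+10) / ((2*x+1)*(2*x+2))) := by
      apply mul_le_mul_of_nonneg_left hQP (by positivity)
    have h2 : x*(x+1)*((8*x+10) / ((2*x+1)*(2*x+2))) ≤ 2*x + 3/2 := by
      rw [mul_div_assoc', div_le_iff₀ hP]
      nlinarith
    linarith
  -- bound 2 : a1 + a2 lower
  have P2 : 2*(x*(a1+a2)) ≥ 4*(x*(Real.log 2 + Real.log x)) := by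
    have ha1 : Real.log 2 + Real.log x ≤ a1 := by
      rw [← Real.log_mul (by norm_num) (ne_of_gt hxpos)]
      exact Real.log_le_log (by positivity) (by linarith)
    have ha2 : Real.log 2 + Real.log x ≤ a2 := by
      rw [← Real.log_mul (by norm_num) (ne_of_gt hxpos)]
      exact Real.log_le_log (by positivity) (by linarith)
    nlinarith
  -- bound 3 : factorial
  have hf : 2*f ≤ 2 + Real.log 2 + Real.log x + 4*(x*(Real.log 2 + Real.log x)) - 4*x := by
    have h := log_fact_le hn1
    rw [show Real.log (4*(n:ℝ)) = 2*Real.log 2 + Real.log x by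
        rw [show (4:ℝ)*(n:ℝ) = 2*2*x by rw [hx]; ring, Real.log_mul (by norm_num) (ne_of_gt hxpos),
          Real.log_mul (by norm_num) (by norm_num)]; ring,
      show Real.log (2*(n:ℝ)) = Real.log 2 + Real.log x by
        rw [show (2:ℝ)*(n:ℝ) = 2*x by rw [hx], Real.log_mul (by norm_num) (ne_of_gt hxpos)]] at h
    nlinarith [h]
  -- bounds on g
  have hg1 : 0 ≤ g1 := Real.log_nonneg (one_le_Zr (by omega))
  have hg0 : 0 ≤ g0 := Real.log_nonneg (one_le_Zr hn0)
  have hg2 : g2 ≤ g0 := Real.log_le_log (Zr_pos (by omega)) (Zr_anti hn0)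
  have P3 : (x+1)*(x+2)*g0 + x*(x+1)*g2 ≤ 4/5 := by
    have hgg := mul_le_mul_of_nonneg_left hg2 (show (0:ℝ) ≤ x*(x+1) by positivity)
    have h1 : (x+1)*(x+2)*g0 + x*(x+1)*g2 ≤ 2*((x+1)^2*g0) := by nlinarith [hgg]
    have h2 : g0 ≤ (2/3) / 4^(n-1) := log_Zr_le hn1
    have h3 : 2*((x+1)^2*g0) ≤ 2*((x+1)^2*((2/3) / 4^(n-1))) := by nlinarith
    have h4 : (0:ℝ) < 4^(n-1) := by positivity
    have h5 := pow_helper hn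
    have h6 : 2*((x+1)^2*((2/3) / 4^(n-1))) ≤ 4/5 := by
      have e : 2*((x+1)^2*((2/3) / 4^(n-1))) = (4*(x+1)^2) / (3*4^(n-1)) := by
        field_simp; ring
      rw [e, div_le_iff₀ (by positivity)]
      nlinarith [h5]
    linarith
  have hgprod : 0 ≤ 2*x*(x+2)*g1 := by positivity
  -- bound 6 : log x
  have hlogx : Real.log x ≤ x/4 + 2*Real.log 2 - 1 := by
    have h := Real.log_le_sub_one_of_pos (show (0:ℝ) < x/4 by positivity)
    rw [Real.log_div (ne_of_gt hxpos) (by norm_num),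
      show (4:ℝ) = 2*2 by norm_num, Real.log_mul (by norm_num) (by norm_num)] at h
    linarith
  have hl2 : Real.log 2 < 0.6931472 := lt_trans Real.log_two_lt_d9 (by norm_num)
  push_cast
  linarith [P1, P2, P3, hf, hgprod, hlogx, hl2, hg1, hxpos]


lemma key2 :
    ((2:ℕ):ℝ) * ((2:ℕ):ℝ) * Real.log 2 = Real.log 2 * 4 := by ring

lemma key_small2 :
    (((2:ℕ):ℝ)+1) * (((2:ℕ):ℝ)+2) * Real.log |((bernoulli (2*2) : ℚ) : ℝ)|
      + ((2:ℕ):ℝ) * (((2:ℕ):ℝ)+1) * Real.log |((bernoulli (2*(2+2)) : ℚ) : ℝ)|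
      < 2*((2:ℕ):ℝ) * (((2:ℕ):ℝ)+2) * Real.log |((bernoulli (2*(2+1)) : ℚ) : ℝ)| := by
  have e4 : |((bernoulli 4 : ℚ) : ℝ)| = 1/30 := by rw [bern4]; norm_num
  have e6 : |((bernoulli 6 : ℚ) : ℝ)| = 1/42 := by rw [bern6]; norm_num
  have e8 : |((bernoulli 8 : ℚ) : ℝ)| = 1/30 := by rw [bern8]; norm_num
  norm_num [e4, e6, e8]
  have h : (42:ℝ)^16 < 30^18 := by norm_num
  have h2 := Real.log_lt_log (by positivity) h
  rw [Real.log_pow, Real.log_pow] at h2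
  rw [Real.log_div one_ne_zero (by norm_num), Real.log_div one_ne_zero (by norm_num),
    Real.log_one]
  push_cast at h2 ⊢
  linarith

lemma key_small3 :
    (((3:ℕ):ℝ)+1) * (((3:ℕ):ℝ)+2) * Real.log |((bernoulli (2*3) : ℚ) : ℝ)|
      + ((3:ℕ):ℝ) * (((3:ℕ):ℝ)+1) * Real.log |((bernoulli (2*(3+2)) : ℚ) : ℝ)|
      < 2*((3:ℕ):ℝ) * (((3:ℕ):ℝ)+2) * Real.log |((bernoulli (2*(3+1)) : ℚ) : ℝ)| := by
  have e6 : |((bernoulli 6 : ℚ) : ℝ)| = 1/42 := by rw [bern6]; norm_num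
  have e8 : |((bernoulli 8 : ℚ) : ℝ)| = 1/30 := by rw [bern8]; norm_num
  have e10 : |((bernoulli 10 : ℚ) : ℝ)| = 5/66 := by rw [bern10]; norm_num
  norm_num [e6, e8, e10]
  have h : (30:ℝ)^30 * 5^12 < 42^20 * 66^12 := by norm_num
  have h2 := Real.log_lt_log (by positivity) h
  rw [Real.log_mul (by positivity) (by positivity),
    Real.log_mul (by positivity) (by positivity),
    Real.log_pow, Real.log_pow, Real.log_pow, Real.log_pow] at h2
  rw [Real.log_div one_ne_zero (by norm_num), Real.log_div one_ne_zero (by norm_num),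
    Real.log_div (by norm_num) (by norm_num), Real.log_one]
  push_cast at h2 ⊢
  linarith

lemma key_all {n : ℕ} (hn : 2 ≤ n) :
    ((n:ℝ)+1) * ((n:ℝ)+2) * Real.log |((bernoulli (2*n) : ℚ) : ℝ)|
      + (n:ℝ) * ((n:ℝ)+1) * Real.log |((bernoulli (2*(n+2)) : ℚ) : ℝ)|
      < 2*(n:ℝ) * ((n:ℝ)+2) * Real.log |((bernoulli (2*(n+1)) : ℚ) : ℝ)| := by
  match n, hn with
  | 2, _ => exact key_small2
  | 3, _ => exact key_small3
  | (m+4), _ => exact key_large (by omega)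

noncomputable def FF (n : ℕ) : ℝ :=
  |((bernoulli (2 * n + 2) : ℚ) : ℝ)| ^ (((n : ℝ) + 1)⁻¹) /
    |((bernoulli (2 * n) : ℚ) : ℝ)| ^ ((n : ℝ)⁻¹)

lemma FF_pos {n : ℕ} (hn : 1 ≤ n) : 0 < FF n := by
  unfold FF
  have h1 : 0 < |((bernoulli (2 * n + 2) : ℚ) : ℝ)| := by
    have := abs_bern_pos (k := n+1) (by omega)
    rw [show 2*(n+1) = 2*n+2 by ring] at this
    exact this
  have h2 := abs_bern_pos (k := n) (by omega)
  exact div_pos (Real.rpow_pos_of_pos h1 _) (Real.rpow_pos_of_pos h2 _)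

lemma log_FF {n : ℕ} (hn : 1 ≤ n) :
    Real.log (FF n) = ((n:ℝ)+1)⁻¹ * Real.log |((bernoulli (2*(n+1)) : ℚ) : ℝ)|
      - (n:ℝ)⁻¹ * Real.log |((bernoulli (2*n) : ℚ) : ℝ)| := by
  unfold FF
  have h1 : 0 < |((bernoulli (2 * n + 2) : ℚ) : ℝ)| := by
    have := abs_bern_pos (k := n+1) (by omega)
    rw [show 2*(n+1) = 2*n+2 by ring] at this
    exact this
  have h2 := abs_bern_pos (k := n) (by omega)
  rw [Real.log_div (ne_of_gt (Real.rpow_pos_of_pos h1 _)) (ne_of_gt (Real.rpow_pos_of_pos h2 _)),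
    Real.log_rpow h1, Real.log_rpow h2, show 2*(n+1) = 2*n+2 by ring]

lemma FF_step {k : ℕ} (hk : 2 ≤ k) : FF (k + 1) < FF k := by
  have hk1 : (1:ℕ) ≤ k := by omega
  rw [← Real.log_lt_log_iff (FF_pos (by omega)) (FF_pos hk1)]
  rw [log_FF hk1, log_FF (by omega : 1 ≤ k + 1)]
  set c : ℝ := (k : ℝ) with hc
  have hcpos : (0:ℝ) < c := by rw [hc]; exact_mod_cast (by omega : 0 < k)
  have hkey := key_all hk
  rw [← hc] at hkey
  set u0 := Real.log |((bernoulli (2*k) : ℚ) : ℝ)|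
  set u1 := Real.log |((bernoulli (2*(k+1)) : ℚ) : ℝ)|
  set u2 := Real.log |((bernoulli (2*(k+2)) : ℚ) : ℝ)|
  have hcast1 : ((k+1 : ℕ) : ℝ) = c + 1 := by push_cast; ring
  rw [hcast1]
  have hd : (0:ℝ) < c*(c+1)*(c+2) := by positivity
  have heq : ((c+1)⁻¹*u1 - c⁻¹*u0) - ((c+1+1)⁻¹*u2 - (c+1)⁻¹*u1)
      = (2*c*(c+2)*u1 - ((c+1)*(c+2)*u0 + c*(c+1)*u2))/(c*(c+1)*(c+2)) := by
    field_simp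
    ring
  have hpos : 0 < ((c+1)⁻¹*u1 - c⁻¹*u0) - ((c+1+1)⁻¹*u2 - (c+1)⁻¹*u1) := by
    rw [heq]
    apply div_pos _ hd
    linarith [hkey]
  linarith [hpos]

theorem bernoulli_root_ratio_strictAnti :
    StrictAntiOn
      (fun n : ℕ =>
        |((bernoulli (2 * n + 2) : ℚ) : ℝ)| ^ (((n : ℝ) + 1)⁻¹) /
          |((bernoulli (2 * n) : ℚ) : ℝ)| ^ ((n : ℝ)⁻¹))
      {n : ℕ | 2 ≤ n} := by
  have haux : StrictAnti (fun m : ℕ => FF (m + 2)) := by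
    apply strictAnti_nat_of_succ_lt
    intro m
    exact FF_step (by omega)
  intro a ha b hb hab
  simp only [Set.mem_setOf_eq] at ha hb
  have h := haux (show a - 2 < b - 2 by omega)
  simp only at h
  rw [show a - 2 + 2 = a by omega, show b - 2 + 2 = b by omega] at h
  exact h
end

section
/- The sequence n ↦ |T_{2n-1}|^(1/n) is strictly increasing for all n ≥ 1, where T_k are the tangent numbers. -/
open Real

noncomputable def Zs (k : ℕ) : ℝ :=
  (-1 : ℝ) ^ (k + 1) * (2 : ℝ) ^ (2 * k - 1) * π ^ (2 * k) * bernoulli (2 * k) /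
    (Nat.factorial (2 * k))

lemma hasSum_Zs {k : ℕ} (hk : k ≠ 0) :
    HasSum (fun n : ℕ => 1 / (n : ℝ) ^ (2 * k)) (Zs k) := hasSum_zeta_nat hk

lemma Zs_ge_one {k : ℕ} (hk : k ≠ 0) : 1 ≤ Zs k := by
  have h := hasSum_Zs hk
  have h1 : HasSum (fun n : ℕ => if n = 1 then (1:ℝ) else 0) 1 := by
    simpa using hasSum_ite_eq 1 (1:ℝ)
  refine hasSum_le (fun n => ?_) h1 h
  by_cases hn : n = 1
  · subst hn; simp
  · simp only [hn, if_false]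
    positivity

lemma Zs_le {k : ℕ} (hk : 1 ≤ k) : Zs k ≤ 1 + (8/3) / 4 ^ k := by
  have hk0 : k ≠ 0 := Nat.one_le_iff_ne_zero.mp hk
  have h := hasSum_Zs hk0
  set c : ℝ := 4 / 4 ^ k with hc
  have hc0 : 0 < c := by positivity
  have h2 : HasSum (fun n : ℕ => c * (1 / (n : ℝ) ^ 2)) (c * (π^2/6)) :=
    hasSum_zeta_two.mul_left _
  have h3 : HasSum (fun n : ℕ => if n = 1 then (1 - c) else 0) (1 - c) := by
    simpa using hasSum_ite_eq 1 (1 - c)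
  have hle : Zs k ≤ c * (π^2/6) + (1 - c) := by
    refine hasSum_le (fun n => ?_) h (h2.add h3)
    rcases n with _ | _ | n
    · simp [hk0]
    · have : 2 * k ≠ 0 := by omega
      simp [this]
    · have hne : n + 1 + 1 ≠ 1 := by omega
      rw [if_neg hne, add_zero]
      set x : ℝ := ((n+1+1 : ℕ) : ℝ) with hx
      have h2x : (2:ℝ) ≤ x := by rw [hx]; exact_mod_cast Nat.le_add_left 2 n
      have hx0 : (0:ℝ) < x := by linarith
      have key : (4:ℝ)^(k-1) * x^2 ≤ x^(2*k) := by
        have e1 : x ^ (2*k) = x ^ (2*(k-1)) * x^2 := by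
          rw [← pow_add]; congr 1; omega
        have e2 : (4:ℝ) ^ (k-1) ≤ x ^ (2*(k-1)) := by
          rw [pow_mul]
          refine pow_le_pow_left₀ (by norm_num) ?_ _
          nlinarith
        rw [e1]
        nlinarith [sq_nonneg x]
      have hck : c = 1 / 4 ^ (k-1) := by
        rw [hc, div_eq_div_iff (by positivity) (by positivity), one_mul, ← pow_succ']
        congr 1; omega
      have h1 : 1/x^(2*k) ≤ 1/((4:ℝ)^(k-1) * x^2) :=
        one_div_le_one_div_of_le (by positivity) key
      refine h1.trans (le_of_eq ?_)
      rw [hck]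
      field_simp
  have hpi : π^2 ≤ 10 := by nlinarith [pi_lt_d2, pi_gt_three]
  have : c * (π^2/6) + (1 - c) = 1 + c * (π^2/6 - 1) := by ring
  rw [this] at hle
  refine hle.trans ?_
  have : c * (π^2/6 - 1) ≤ c * (2/3) := by
    apply mul_le_mul_of_nonneg_left _ hc0.le
    nlinarith
  have hcc : c * (2/3) = (8/3) / 4^k := by rw [hc]; ring
  linarith [this, hcc ▸ this]

noncomputable def Af (n : ℕ) : ℝ :=
  2 * ((4:ℝ)^n - 1) * (Nat.factorial (2*n-1)) / π^(2*n)

noncomputable def cf (n : ℕ) : ℝ :=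
  ((4:ℝ)^(n+1) - 1) / ((4:ℝ)^n - 1) * (2*n*(2*n+1)) / π^2

lemma four_pow_ge {n : ℕ} : 1 + 3*(n:ℝ) ≤ 4^n := by
  have := one_add_mul_le_pow (by norm_num : (-2:ℝ) ≤ 3) n
  calc (1:ℝ) + 3*n = 1 + n*3 := by ring
  _ ≤ (1+3)^n := this
  _ = 4^n := by norm_num

lemma four_pow_pos_sub {n : ℕ} (hn : 1 ≤ n) : (0:ℝ) < 4^n - 1 := by
  have h : (1:ℝ) ≤ (n:ℝ) := by exact_mod_cast hn
  nlinarith [four_pow_ge (n := n)]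

lemma cf_eq {n : ℕ} (hn : 1 ≤ n) :
    cf n = ((4:ℝ)^(n+1) - 1) * (2*n*(2*n+1)) / (((4:ℝ)^n - 1) * π^2) := by
  have h1 := four_pow_pos_sub hn
  have hpi := pi_pos
  unfold cf
  field_simp

lemma Af_pos {n : ℕ} (hn : 1 ≤ n) : 0 < Af n := by
  have h1 := four_pow_pos_sub hn
  have h2 : (0:ℝ) < (Nat.factorial (2*n-1) : ℝ) := by
    exact_mod_cast Nat.factorial_pos _
  have hpi := pi_pos
  unfold Af
  positivity

lemma cf_pos {n : ℕ} (hn : 1 ≤ n) : 0 < cf n := by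
  rw [cf_eq hn]
  have h1 := four_pow_pos_sub hn
  have h2 := four_pow_pos_sub (n := n+1) (by omega)
  have hn' : (0:ℝ) < (n:ℝ) := by exact_mod_cast hn
  have hpi := pi_pos
  positivity

lemma Af_succ {n : ℕ} (hn : 1 ≤ n) : Af (n+1) = Af n * cf n := by
  unfold Af cf
  have e1 : 2*(n+1)-1 = (2*n-1) + 1 + 1 := by omega
  have e2 : 2*n - 1 + 1 = 2*n := by omega
  rw [e1, Nat.factorial_succ, Nat.factorial_succ, e2]
  have h1 := four_pow_pos_sub hn
  have hpi := pi_pos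
  have e4 : π ^ (2*(n+1)) = π^(2*n) * π^2 := by
    rw [show 2*(n+1) = 2*n + 2 from by ring, pow_add]
  rw [e4]
  push_cast
  field_simp

lemma cf_mono {n : ℕ} (hn : 1 ≤ n) : cf n ≤ cf (n+1) := by
  rw [cf_eq hn, cf_eq (by omega : 1 ≤ n+1)]
  have h1 := four_pow_pos_sub hn
  have h2 := four_pow_pos_sub (n := n+1) (by omega)
  have hpi : (0:ℝ) < π^2 := by positivity
  set a : ℝ := 4^n with ha
  have hge : 1 + 3*(n:ℝ) ≤ a := four_pow_ge
  have hn' : (1:ℝ) ≤ (n:ℝ) := by exact_mod_cast hn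
  have e1 : (4:ℝ)^(n+1) = 4*a := by rw [pow_succ]; ring
  have e2 : (4:ℝ)^(n+1+1) = 16*a := by rw [pow_succ, pow_succ]; ring
  rw [e1, e2] at *
  have ha0 : (0:ℝ) ≤ a := by linarith
  have hsub : (0:ℝ) ≤ a - 3*(n:ℝ) - 1 := by linarith
  have h4a : (0:ℝ) < 4*a - 1 := by linarith
  rw [div_le_div_iff₀ (mul_pos h1 hpi) (mul_pos h4a hpi)]
  push_cast
  have key : (4*a-1)*(2*(n:ℝ)*(2*(n:ℝ)+1))*(4*a-1) ≤
      (16*a-1)*(2*((n:ℝ)+1)*(2*((n:ℝ)+1)+1))*(a-1) := by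
    nlinarith [mul_nonneg (mul_nonneg ha0 hsub) (by linarith : (0:ℝ) ≤ 8*(n:ℝ)+6),
      mul_nonneg ha0 (by nlinarith : (0:ℝ) ≤ 348*(n:ℝ)^2+262*(n:ℝ)-6)]
  nlinarith [mul_le_mul_of_nonneg_right key hpi.le]

lemma Af_le_cf_pow : ∀ n : ℕ, Af (n+1) ≤ cf (n+1) ^ n := by
  intro n
  induction n with
  | zero =>
    have hpi : 3 < π := pi_gt_three
    unfold Af
    norm_num
    rw [div_le_one (by positivity)]
    nlinarith
  | succ m ih =>
    have h1 : Af (m+2) = Af (m+1) * cf (m+1) := Af_succ (by omega)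
    have hc : 0 ≤ cf (m+1) := (cf_pos (by omega)).le
    calc Af (m+2) = Af (m+1) * cf (m+1) := h1
    _ ≤ cf (m+1)^m * cf (m+1) := by
        apply mul_le_mul_of_nonneg_right ih hc
    _ = cf (m+1)^(m+1) := by rw [pow_succ]
    _ ≤ cf (m+2)^(m+1) := by
        apply pow_le_pow_left₀ hc (cf_mono (by omega))

noncomputable def sb (n : ℕ) : ℝ := 1 + (8/3) / 4^n

lemma sb_pow_lt {n : ℕ} (hn : 1 ≤ n) : sb n ^ (n+1) < cf n := by
  have hpi2 : π^2 < 10 := by nlinarith [pi_lt_d2, pi_pos]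
  have hpi0 : (0:ℝ) < π^2 := by positivity
  have h1 := four_pow_pos_sub hn
  have hn1' : (1:ℝ) ≤ (n:ℝ) := by exact_mod_cast hn
  have hcf_lb : 4 * (2*(n:ℝ)*(2*n+1)) / π^2 < cf n := by
    rw [cf_eq hn]
    rw [div_lt_div_iff₀ hpi0 (by positivity)]
    have h4 : 4*((4:ℝ)^n - 1) < (4:ℝ)^(n+1) - 1 := by
      rw [pow_succ]; linarith
    have hx : (0:ℝ) < 2*(n:ℝ)*(2*n+1) := by nlinarith
    nlinarith [mul_pos hx hpi0]
  rcases eq_or_lt_of_le hn with h | h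
  · -- n = 1
    subst h
    have e : sb 1 ^ (1+1) = 25/9 := by unfold sb; norm_num
    have ecf : cf 1 = 30/π^2 := by
      rw [cf_eq le_rfl]
      push_cast
      rw [div_eq_div_iff (by positivity) hpi0.ne']
      ring
    rw [e, ecf, lt_div_iff₀ hpi0]
    nlinarith
  · -- n ≥ 2
    have hn2 : 2 ≤ n := h
    have hn' : (2:ℝ) ≤ (n:ℝ) := by exact_mod_cast hn2
    set x : ℝ := (8/3) / 4^n with hx
    have h4n : (0:ℝ) < 4^n := by positivity
    have hx0 : 0 < x := by positivity
    have key : 16 * ((n:ℝ)+1) ≤ 3 * 4^n := by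
      have e : (4:ℝ)^n = 16 * 4^(n-2) := by
        conv_lhs => rw [show n = (n-2)+2 from by omega]
        rw [pow_add]
        ring
      rw [e]
      have hg : 1 + 3*((n:ℝ)-2) ≤ 4^(n-2) := by
        have h' := four_pow_ge (n := n-2)
        have ec : ((n-2 : ℕ) : ℝ) = (n:ℝ) - 2 := by
          push_cast [Nat.cast_sub hn2]; ring
        rwa [ec] at h'
      nlinarith
    have hxhalf : ((n:ℝ)+1) * x ≤ 1/2 := by
      have e : ((n:ℝ)+1) * x = (8*((n:ℝ)+1)/3)/4^n := by rw [hx]; ring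
      rw [e, div_le_iff₀ h4n]
      linarith
    have hx1 : x ≤ 1/6 := by
      rw [hx, div_le_iff₀ h4n]
      nlinarith
    have hb : 1 - ((n:ℝ)+1) * x ≤ (1-x)^(n+1) := by
      have h' := one_add_mul_le_pow (by linarith : (-2:ℝ) ≤ -x) (n+1)
      calc 1 - ((n:ℝ)+1)*x = 1 + ((n+1 : ℕ) : ℝ) * (-x) := by push_cast; ring
      _ ≤ (1 + -x)^(n+1) := h'
      _ = (1-x)^(n+1) := by ring_nf
    have hbpos : (0:ℝ) < (1-x)^(n+1) := pow_pos (by linarith) _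
    have hprod : (1+x)^(n+1) * (1-x)^(n+1) ≤ 1 := by
      rw [← mul_pow, show (1+x)*(1-x) = 1-x^2 from by ring]
      apply pow_le_one₀ <;> nlinarith
    have h2 : (1+x)^(n+1) ≤ 2 := by
      have hhalf : (1:ℝ)/2 ≤ (1-x)^(n+1) := by linarith
      nlinarith [pow_pos (by linarith : (0:ℝ) < 1+x) (n+1)]
    have e : sb n ^ (n+1) = (1+x)^(n+1) := by unfold sb; rw [hx]
    rw [e]
    refine lt_of_le_of_lt h2 (lt_trans ?_ hcf_lb)
    rw [lt_div_iff₀ hpi0]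
    nlinarith

lemma abs_bern {k : ℕ} (hk : 1 ≤ k) :
    |((bernoulli (2*k) : ℚ) : ℝ)| * (2^(2*k-1) * π^(2*k)) =
      Zs k * (Nat.factorial (2*k)) := by
  have h0 : (0:ℝ) ≤ Zs k := le_trans zero_le_one (Zs_ge_one (by omega))
  have hF : (0:ℝ) < (Nat.factorial (2*k) : ℝ) := by exact_mod_cast Nat.factorial_pos _
  set B : ℝ := ((bernoulli (2*k) : ℚ) : ℝ) with hBdef
  have h1 : Zs k * (Nat.factorial (2*k) : ℝ) = (-1:ℝ)^(k+1) * 2^(2*k-1) * π^(2*k) * B := by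
    unfold Zs
    field_simp
    exact hBdef.symm
  have h3 : |(-1:ℝ)^(k+1) * 2^(2*k-1) * π^(2*k) * B| = 2^(2*k-1) * π^(2*k) * |B| := by
    rw [abs_mul, abs_mul, abs_mul, abs_pow, abs_neg, abs_one, one_pow, one_mul,
      abs_pow, abs_pow, abs_two, abs_of_nonneg pi_pos.le]
  calc |B| * (2^(2*k-1) * π^(2*k)) = 2^(2*k-1) * π^(2*k) * |B| := by ring
  _ = |(-1:ℝ)^(k+1) * 2^(2*k-1) * π^(2*k) * B| := h3.symm
  _ = |Zs k * (Nat.factorial (2*k) : ℝ)| := by rw [← h1]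
  _ = Zs k * (Nat.factorial (2*k) : ℝ) := abs_of_nonneg (by positivity)

lemma step_ineq {n : ℕ} (hn : 1 ≤ n) :
    (Af n * Zs n)^(n+1) < (Af (n+1) * Zs (n+1))^n := by
  have hA := Af_pos hn
  have hA1 := Af_pos (n := n+1) (by omega)
  have hc := cf_pos hn
  have hZ1 : 1 ≤ Zs n := Zs_ge_one (by omega)
  have hZ1' : 1 ≤ Zs (n+1) := Zs_ge_one (by omega)
  have hZu : Zs n ≤ sb n := by
    have := Zs_le hn
    unfold sb
    linarith
  have hsb : (1:ℝ) ≤ sb n := by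
    unfold sb
    have : (0:ℝ) < (8/3)/4^n := by positivity
    linarith
  calc (Af n * Zs n)^(n+1) ≤ (Af n * sb n)^(n+1) := by
        apply pow_le_pow_left₀ (by positivity)
        exact mul_le_mul_of_nonneg_left hZu hA.le
  _ = Af n ^ n * (Af n * sb n^(n+1)) := by rw [mul_pow, pow_succ]; ring
  _ < Af n ^ n * cf n ^ n := by
      apply mul_lt_mul_of_pos_left ?_ (pow_pos hA n)
      have h1 : Af n ≤ cf n ^ (n-1) := by
        obtain ⟨m, rfl⟩ : ∃ m, n = m+1 := ⟨n-1, by omega⟩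
        simpa using Af_le_cf_pow m
      have h2 := sb_pow_lt hn
      calc Af n * sb n^(n+1) ≤ cf n^(n-1) * sb n^(n+1) := by
            apply mul_le_mul_of_nonneg_right h1 (by positivity)
      _ < cf n^(n-1) * cf n := by
            apply mul_lt_mul_of_pos_left h2 (pow_pos hc _)
      _ = cf n ^ n := by rw [← pow_succ]; congr 1; omega
  _ = Af (n+1)^n := by rw [Af_succ hn, mul_pow]
  _ ≤ (Af (n+1) * Zs (n+1))^n := by
        apply pow_le_pow_left₀ hA1.le
        exact le_mul_of_one_le_right hA1.le hZ1'

theorem tangent_root_strictMono (T : ℕ → ℝ)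
    (hT : ∀ n : ℕ, 1 ≤ n →
      |T (2 * n - 1)| =
        2 ^ (2 * n) * (2 ^ (2 * n) - 1) * |((bernoulli (2 * n) : ℚ) : ℝ)| / (2 * n)) :
    StrictMonoOn (fun n : ℕ => |T (2 * n - 1)| ^ ((n : ℝ)⁻¹)) {n : ℕ | 1 ≤ n} := by
  -- express |T (2n-1)| via Af and Zs
  have hfA : ∀ n : ℕ, 1 ≤ n → |T (2*n-1)| = Af n * Zs n := by
    intro n hn
    have hB := abs_bern (k := n) hn
    have hP : (0:ℝ) < 2^(2*n-1) * π^(2*n) := by positivity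
    have hBval : |((bernoulli (2*n) : ℚ) : ℝ)| =
        Zs n * (Nat.factorial (2*n)) / (2^(2*n-1) * π^(2*n)) := by
      rw [eq_div_iff hP.ne']
      exact hB
    rw [hT n hn, hBval]
    unfold Af
    have e1 : (Nat.factorial (2*n) : ℝ) = (2*n) * (Nat.factorial (2*n-1)) := by
      have h : Nat.factorial (2*n) = (2*n) * Nat.factorial (2*n-1) := by
        conv_lhs => rw [show 2*n = (2*n-1)+1 from by omega]
        rw [Nat.factorial_succ, show 2*n-1+1 = 2*n from by omega]
      push_cast [h]
      ring
    have e2 : (2:ℝ)^(2*n) = 2 * 2^(2*n-1) := by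
      conv_lhs => rw [show 2*n = (2*n-1)+1 from by omega]
      rw [pow_succ]; ring
    have e3 : (4:ℝ)^n = 2 * 2^(2*n-1) := by
      rw [← e2, pow_mul]; norm_num
    rw [e1, e2, e3]
    have hn0 : (0:ℝ) < (n:ℝ) := by exact_mod_cast hn
    have hc : (0:ℝ) < (2:ℝ)^(2*n-1) := by positivity
    have hpi := pi_pos
    field_simp
  -- positivity of f
  have hfpos : ∀ n : ℕ, 1 ≤ n → 0 < Af n * Zs n := fun n hn =>
    mul_pos (Af_pos hn) (lt_of_lt_of_le one_pos (Zs_ge_one (by omega)))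
  -- one-step monotonicity
  have hstep : ∀ n : ℕ, 1 ≤ n →
      |T (2*n-1)| ^ ((n:ℝ)⁻¹) < |T (2*(n+1)-1)| ^ (((n+1:ℕ):ℝ))⁻¹ := by
    intro n hn
    rw [hfA n hn, hfA (n+1) (by omega)]
    set x := Af n * Zs n with hxd
    set y := Af (n+1) * Zs (n+1) with hyd
    have hx := hfpos n hn
    have hy := hfpos (n+1) (by omega)
    have key : x^(n+1) < y^n := step_ineq hn
    have hn0 : ((n:ℝ)) ≠ 0 := by
      have : (0:ℝ) < (n:ℝ) := by exact_mod_cast hn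
      linarith
    have ha0 : (0:ℝ) ≤ x ^ ((n:ℝ)⁻¹) := Real.rpow_nonneg hx.le _
    have hb0 : (0:ℝ) ≤ y ^ (((n+1:ℕ):ℝ))⁻¹ := Real.rpow_nonneg hy.le _
    have hk : n*(n+1) ≠ 0 := Nat.mul_ne_zero (by omega) (by omega)
    have cast1 : ((n*(n+1) : ℕ) : ℝ) = (n:ℝ)*((n:ℝ)+1) := by push_cast; ring
    have h1 : (x ^ ((n:ℝ)⁻¹))^(n*(n+1)) = x^(n+1) := by
      rw [← Real.rpow_natCast (x ^ ((n:ℝ)⁻¹)) (n*(n+1)), ← Real.rpow_mul hx.le, cast1]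
      rw [show (n:ℝ)⁻¹ * ((n:ℝ)*((n:ℝ)+1)) = ((n+1:ℕ):ℝ) from by push_cast; field_simp]
      exact Real.rpow_natCast x (n+1)
    have h2 : (y ^ ((((n+1:ℕ)):ℝ))⁻¹)^(n*(n+1)) = y^n := by
      rw [← Real.rpow_natCast (y ^ ((((n+1:ℕ)):ℝ))⁻¹) (n*(n+1)), ← Real.rpow_mul hy.le, cast1]
      rw [show (((n+1:ℕ)):ℝ)⁻¹ * ((n:ℝ)*((n:ℝ)+1)) = ((n:ℕ):ℝ) from by push_cast; field_simp]
      exact Real.rpow_natCast y n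
    refine (pow_lt_pow_iff_left₀ ha0 hb0 hk).mp ?_
    rw [h1, h2]
    exact key
  -- chain
  intro a ha b hb hab
  simp only [Set.mem_setOf_eq] at ha hb
  clear hb
  simp only []
  induction b, hab using Nat.le_induction with
  | base => exact hstep a ha
  | succ m hm ih => exact lt_trans ih (hstep m (by omega))
end

section
/- The sequence n ↦ |E_{2n}|^(1/n) is strictly increasing for all n ≥ 1, where E_k are the Euler numbers. -/
open Real

private lemma nat_key : ∀ n : ℕ, 1 ≤ n →
    4 * Nat.factorial (2 * n) ≤ ((2 * n + 1) * (2 * n + 2)) ^ n := by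
  intro n hn
  induction n, hn using Nat.le_induction with
  | base => decide
  | succ n hn ih =>
    have h1 : Nat.factorial (2 * (n + 1)) =
        (2 * n + 1 + 1) * ((2 * n + 1) * Nat.factorial (2 * n)) := by
      rw [show 2 * (n + 1) = 2 * n + 1 + 1 by ring, Nat.factorial_succ, Nat.factorial_succ]
    calc 4 * Nat.factorial (2 * (n + 1))
        = ((2 * n + 1) * (2 * n + 2)) * (4 * Nat.factorial (2 * n)) := by rw [h1]; ring
      _ ≤ ((2 * n + 1) * (2 * n + 2)) * ((2 * n + 1) * (2 * n + 2)) ^ n :=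
          Nat.mul_le_mul_left _ ih
      _ = ((2 * n + 1) * (2 * n + 2)) ^ (n + 1) := by rw [pow_succ]; ring
      _ ≤ ((2 * (n + 1) + 1) * (2 * (n + 1) + 2)) ^ (n + 1) :=
          Nat.pow_le_pow_left (by nlinarith) _

private lemma pow_ineq (n : ℕ) (hn : 1 ≤ n) :
    ((4 : ℝ) ^ (2 * n + 1) * (Nat.factorial (2 * n) : ℝ) / π ^ (2 * n + 1)) ^ (n + 1) ≤
    ((4 : ℝ) ^ (2 * (n + 1) + 1) * (Nat.factorial (2 * (n + 1)) : ℝ) / π ^ (2 * (n + 1) + 1) /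
      (1 + ((3 : ℝ) ^ (2 * (n + 1) + 1))⁻¹)) ^ n := by
  have hπ : (0 : ℝ) < π := pi_pos
  have hπ3 : (3 : ℝ) < π := pi_gt_three
  set c : ℝ := ((3 : ℝ) ^ (2 * (n + 1) + 1))⁻¹ with hc
  have hc0 : 0 < c := by positivity
  set F : ℝ := (Nat.factorial (2 * n) : ℝ) with hF
  have hF0 : (0 : ℝ) < F := by positivity
  set M : ℝ := (((2 * n + 1) * (2 * n + 2) : ℕ) : ℝ) with hM
  have hM0 : (0 : ℝ) < M := by positivity
  set A : ℝ := (4 : ℝ) ^ (2 * n + 1) * F / π ^ (2 * n + 1) with hA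
  have hA0 : (0 : ℝ) < A := by positivity
  -- the successor upper bound factors
  have hF' : (Nat.factorial (2 * (n + 1)) : ℝ) = M * F := by
    rw [show 2 * (n + 1) = 2 * n + 1 + 1 by ring, Nat.factorial_succ, Nat.factorial_succ]
    push_cast [hM, hF]; ring
  have hB_eq : (4 : ℝ) ^ (2 * (n + 1) + 1) * (Nat.factorial (2 * (n + 1)) : ℝ) /
      π ^ (2 * (n + 1) + 1) / (1 + c) = A * (4 ^ 2 * M / (π ^ 2 * (1 + c))) := by
    rw [hF', hA]
    field_simp
    ring
  -- key scalar inequality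
  have h1c : (1 + c) ^ n ≤ 3 := by
    have hec : 1 + c ≤ Real.exp c := by linarith [Real.add_one_le_exp c]
    have h2 : (1 + c) ^ n ≤ Real.exp c ^ n := pow_le_pow_left₀ (by positivity) hec n
    have h3 : Real.exp c ^ n = Real.exp (n * c) := (Real.exp_nat_mul c n).symm
    have hnc : (n : ℝ) * c ≤ 1 := by
      have hn3 : (n : ℝ) ≤ (3 : ℝ) ^ (2 * (n + 1) + 1) := by
        have : n ≤ 3 ^ (2 * (n + 1) + 1) := by
          calc n ≤ 2 ^ n := (Nat.lt_two_pow_self (n := n)).le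
            _ ≤ 3 ^ n := Nat.pow_le_pow_left (by norm_num) n
            _ ≤ 3 ^ (2 * (n + 1) + 1) := Nat.pow_le_pow_right (by norm_num) (by omega)
        exact_mod_cast this
      rw [hc, inv_eq_one_div, mul_one_div, div_le_one (by positivity)]
      exact hn3
    have h4 : Real.exp ((n : ℝ) * c) ≤ Real.exp 1 := Real.exp_le_exp.2 hnc
    have h5 : Real.exp 1 ≤ 3 := by linarith [Real.exp_one_lt_d9]
    calc (1 + c) ^ n ≤ Real.exp c ^ n := h2
      _ = Real.exp ((n : ℝ) * c) := h3
      _ ≤ 3 := le_trans h4 h5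
  have hkey : 4 * F * (1 + c) ^ n ≤ π * M ^ n := by
    have h2 : 4 * F ≤ M ^ n := by
      have := nat_key n hn
      have : ((4 * Nat.factorial (2 * n) : ℕ) : ℝ) ≤
          ((((2 * n + 1) * (2 * n + 2)) ^ n : ℕ) : ℝ) := by exact_mod_cast this
      push_cast at this
      rw [hF, hM]; push_cast
      convert this using 2
    have hMn : (0 : ℝ) ≤ M ^ n := by positivity
    have hprod : 4 * F * (1 + c) ^ n ≤ M ^ n * 3 :=
      mul_le_mul h2 h1c (by positivity) (by positivity)
    nlinarith
  clear_value c F M A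
  -- A ≤ X^n
  have hAX : A ≤ (4 ^ 2 * M / (π ^ 2 * (1 + c))) ^ n := by
    rw [div_pow, hA, div_le_div_iff₀ (by positivity) (by positivity)]
    calc (4 : ℝ) ^ (2 * n + 1) * F * (π ^ 2 * (1 + c)) ^ n
        = ((4 : ℝ) ^ (2 * n) * π ^ (2 * n)) * (4 * F * (1 + c) ^ n) := by
          rw [mul_pow, ← pow_mul]; ring
      _ ≤ ((4 : ℝ) ^ (2 * n) * π ^ (2 * n)) * (π * M ^ n) :=
          mul_le_mul_of_nonneg_left hkey (by positivity)
      _ = (4 ^ 2 * M) ^ n * π ^ (2 * n + 1) := by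
          rw [mul_pow, ← pow_mul]; ring
  calc A ^ (n + 1)
      = A ^ n * A := pow_succ A n
    _ ≤ A ^ n * (4 ^ 2 * M / (π ^ 2 * (1 + c))) ^ n :=
        mul_le_mul_of_nonneg_left hAX (by positivity)
    _ = (A * (4 ^ 2 * M / (π ^ 2 * (1 + c)))) ^ n := (mul_pow _ _ _).symm
    _ = ((4 : ℝ) ^ (2 * (n + 1) + 1) * (Nat.factorial (2 * (n + 1)) : ℝ) /
          π ^ (2 * (n + 1) + 1) / (1 + c)) ^ n := by rw [hB_eq]

private lemma rpow_step {A B : ℝ} (hA : 0 < A) (hB : 0 < B) {n : ℕ} (hn : 1 ≤ n)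
    (h : A ^ (n + 1) ≤ B ^ n) : A ^ ((n : ℝ))⁻¹ ≤ B ^ (((n : ℝ) + 1))⁻¹ := by
  have hn' : (0 : ℝ) < n := by exact_mod_cast hn
  have hn1 : (0 : ℝ) < (n : ℝ) + 1 := by linarith
  have e1 : A ^ ((n : ℝ))⁻¹ = (A ^ (n + 1)) ^ (((n : ℝ) * ((n : ℝ) + 1))⁻¹) := by
    rw [← Real.rpow_natCast A (n + 1), ← Real.rpow_mul hA.le]
    congr 1
    push_cast
    try field_simp
  have e2 : B ^ (((n : ℝ) + 1))⁻¹ = (B ^ n) ^ (((n : ℝ) * ((n : ℝ) + 1))⁻¹) := by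
    rw [← Real.rpow_natCast B n, ← Real.rpow_mul hB.le]
    congr 1
    field_simp
    try ring
  rw [e1, e2]
  exact Real.rpow_le_rpow (by positivity) h (by positivity)

open Real in
theorem euler_root_strictMono (E : ℕ → ℝ)
    (hE : ∀ n : ℕ, 1 ≤ n →
      (4 ^ (2 * n + 1) * (Nat.factorial (2 * n) : ℝ) / π ^ (2 * n + 1)) /
          (1 + ((3 : ℝ) ^ (2 * n + 1))⁻¹) < |E (2 * n)| ∧
        |E (2 * n)| < 4 ^ (2 * n + 1) * (Nat.factorial (2 * n) : ℝ) / π ^ (2 * n + 1)) :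
    StrictMonoOn (fun n : ℕ => |E (2 * n)| ^ ((n : ℝ)⁻¹)) {n : ℕ | 1 ≤ n} := by
  have hπ : (0 : ℝ) < π := pi_pos
  have hpos : ∀ n : ℕ, 1 ≤ n → 0 < |E (2 * n)| := by
    intro n hn
    have h := (hE n hn).1
    have : (0 : ℝ) < (4 ^ (2 * n + 1) * (Nat.factorial (2 * n) : ℝ) / π ^ (2 * n + 1)) /
        (1 + ((3 : ℝ) ^ (2 * n + 1))⁻¹) := by positivity
    linarith
  have hstep : ∀ n : ℕ, 1 ≤ n →
      |E (2 * n)| ^ ((n : ℝ))⁻¹ < |E (2 * (n + 1))| ^ ((((n : ℕ) : ℝ)) + 1)⁻¹ := by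
    intro n hn
    have hUB := (hE n hn).2
    have hLB := (hE (n + 1) (by omega)).1
    set U : ℝ := 4 ^ (2 * n + 1) * (Nat.factorial (2 * n) : ℝ) / π ^ (2 * n + 1) with hU
    set L : ℝ := (4 ^ (2 * (n + 1) + 1) * (Nat.factorial (2 * (n + 1)) : ℝ) /
        π ^ (2 * (n + 1) + 1)) / (1 + ((3 : ℝ) ^ (2 * (n + 1) + 1))⁻¹) with hL
    have hU0 : 0 < U := by rw [hU]; positivity
    have hL0 : 0 < L := by rw [hL]; positivity
    have hmid : U ^ ((n : ℝ))⁻¹ ≤ L ^ (((n : ℝ)) + 1)⁻¹ :=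
      rpow_step hU0 hL0 hn (pow_ineq n hn)
    have h1 : |E (2 * n)| ^ ((n : ℝ))⁻¹ < U ^ ((n : ℝ))⁻¹ :=
      Real.rpow_lt_rpow (abs_nonneg _) hUB (by positivity)
    have h2 : L ^ (((n : ℝ)) + 1)⁻¹ < |E (2 * (n + 1))| ^ (((n : ℝ)) + 1)⁻¹ :=
      Real.rpow_lt_rpow hL0.le hLB (by positivity)
    exact lt_of_lt_of_le h1 (lt_of_le_of_lt hmid h2).le
  intro a ha b hb hab
  simp only [Set.mem_setOf_eq] at ha hb
  simp only
  have key : ∀ b : ℕ, a + 1 ≤ b → |E (2 * a)| ^ ((a : ℝ))⁻¹ < |E (2 * b)| ^ ((b : ℝ))⁻¹ := by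
    intro b hb'
    induction b, hb' using Nat.le_induction with
    | base =>
      have := hstep a ha
      push_cast
      push_cast at this
      exact this
    | succ b hb2 ih =>
      have h2 := hstep b (by omega)
      push_cast at h2 ⊢
      exact lt_trans ih h2
  exact key b hab
end

section
/- The sequence n ↦ |E_{2n+2}|^(1/(n+1)) / |E_{2n}|^(1/n) is strictly decreasing for all n ≥ 1, where E_k are the Euler numbers. -/
open Real

private lemma strictAntiOn_aux {f : ℕ → ℝ} (h : ∀ n, 1 ≤ n → f (n+1) < f n) :
    StrictAntiOn f {n : ℕ | 1 ≤ n} := by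
  intro a ha b hb hab
  simp only [Set.mem_setOf_eq] at ha hb
  induction b with
  | zero => omega
  | succ k ih =>
    rcases Nat.lt_or_ge a k with h' | h'
    · exact (h k (by omega)).trans (ih (by omega) (by omega))
    · have : a = k := by omega
      subst this; exact h a ha

private lemma fact_sq_le (k : ℕ) : ((k.factorial : ℝ))^2 * 4^k ≤ ((k:ℝ)+1)^(2*k) := by
  induction k with
  | zero => norm_num
  | succ k ih =>
    have hk1 : (0:ℝ) < (k:ℝ)+1 := by positivity
    have hb : (2:ℝ) ≤ (1 + 1/((k:ℝ)+1))^(k+1) := by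
      have h2 : (-2:ℝ) ≤ 1/((k:ℝ)+1) := by
        have : (0:ℝ) ≤ 1/((k:ℝ)+1) := by positivity
        linarith
      have := one_add_mul_le_pow h2 (k+1)
      have he : (1:ℝ) + ((k:ℝ)+1) * (1/((k:ℝ)+1)) = 2 := by
        field_simp
        norm_num
      push_cast at this
      linarith [this, he ▸ le_refl (2:ℝ)]
    have hb4 : (4:ℝ) ≤ (1 + 1/((k:ℝ)+1))^(2*(k+1)) := by
      have := mul_le_mul hb hb (by norm_num) (by positivity)
      calc (4:ℝ) = 2*2 := by norm_num
        _ ≤ _ := by rw [two_mul (k+1), pow_add]; exact this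
    have hstep : (4:ℝ) * ((k:ℝ)+1)^(2*(k+1)) ≤ ((k:ℝ)+2)^(2*(k+1)) := by
      have := mul_le_mul_of_nonneg_right hb4 (pow_nonneg hk1.le (2*(k+1)))
      calc (4:ℝ) * ((k:ℝ)+1)^(2*(k+1)) ≤ (1 + 1/((k:ℝ)+1))^(2*(k+1)) * ((k:ℝ)+1)^(2*(k+1)) := this
        _ = ((k:ℝ)+2)^(2*(k+1)) := by
            rw [← mul_pow]; congr 1; field_simp; ring
    calc (((k+1).factorial : ℝ))^2 * 4^(k+1)
        = 4 * (((k:ℝ)+1)^2 * ((k.factorial:ℝ)^2 * 4^k)) := by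
          push_cast [Nat.factorial_succ]; ring
      _ ≤ 4 * (((k:ℝ)+1)^2 * ((k:ℝ)+1)^(2*k)) := by
          nlinarith [sq_nonneg ((k:ℝ)+1), pow_nonneg hk1.le (2*k)]
      _ = 4 * ((k:ℝ)+1)^(2*(k+1)) := by rw [← pow_add]; ring_nf
      _ ≤ ((k:ℝ)+2)^(2*(k+1)) := hstep
      _ = (((k+1:ℕ):ℝ)+1)^(2*(k+1)) := by push_cast; ring_nf

private lemma nat_delta (n : ℕ) (hn : 1 ≤ n) : 80*n*(n+2) ≤ 3^(2*n+3) := by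
  induction n, hn using Nat.le_induction with
  | base => norm_num
  | succ k hk ih =>
    have h9 : 80*(k+1)*(k+3) ≤ 9*(80*k*(k+2)) := by nlinarith
    calc 80*(k+1)*(k+1+2) ≤ 9*(80*k*(k+2)) := h9
      _ ≤ 9*3^(2*k+3) := by omega
      _ = 3^(2*(k+1)+3) := by rw [pow_add, pow_add]; ring

private lemma delta_bound (n : ℕ) (hn : 1 ≤ n) :
    (1 + ((3:ℝ)^(2*n+3))⁻¹)^(2*n*(n+2)) ≤ 40/39 := by
  set δ : ℝ := ((3:ℝ)^(2*n+3))⁻¹ with hδdef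
  set k : ℕ := 2*n*(n+2) with hkdef
  have hδpos : 0 < δ := by positivity
  have hδ1 : δ ≤ 1 := by
    rw [hδdef]
    exact inv_le_one_of_one_le₀ (one_le_pow₀ (by norm_num))
  have hkδ : (k:ℝ) * δ ≤ 1/40 := by
    rw [hδdef, mul_inv_le_iff₀ (by positivity)]
    have := nat_delta n hn
    have : (80*n*(n+2) : ℝ) ≤ (3:ℝ)^(2*n+3) := by exact_mod_cast this
    push_cast [hkdef]
    nlinarith
  have hmδ : (0:ℝ) < 1 - k*δ := by linarith
  have h1 : (1:ℝ) - k*δ ≤ (1-δ)^k := by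
    have := one_add_mul_le_pow (a := -δ) (by linarith) k
    simp only [← sub_eq_add_neg, mul_neg] at this
    linarith
  have h2 : (1+δ)^k * (1-δ)^k ≤ 1 := by
    rw [← mul_pow]
    have : (1+δ)*(1-δ) = 1 - δ^2 := by ring
    rw [this]
    apply pow_le_one₀ (by nlinarith) (by nlinarith)
  have h3 : (1+δ)^k ≤ 1/(1-k*δ) := by
    rw [le_div_iff₀ hmδ]
    calc (1+δ)^k * (1-k*δ) ≤ (1+δ)^k * (1-δ)^k := by
          apply mul_le_mul_of_nonneg_left h1 (by positivity)
      _ ≤ 1 := h2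
  calc (1+δ)^k ≤ 1/(1-k*δ) := h3
    _ ≤ 40/39 := by
      rw [div_le_div_iff₀ hmδ (by norm_num)]
      nlinarith

private lemma ratio_bound (n : ℕ) (hn : 1 ≤ n) :
    (((2*n:ℝ)+3)*((2*n:ℝ)+4))^(n*(n+1)) ≤
      (((2*n:ℝ)+1)*((2*n:ℝ)+2))^(n*(n+1)) * (exp 1)^(2*n+2) := by
  set d : ℝ := ((2*n:ℝ)+1)*((2*n:ℝ)+2) with hd
  have hdpos : 0 < d := by positivity
  set y : ℝ := ((8*n:ℝ)+10)/d with hy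
  have hypos : 0 < y := by positivity
  have hc : ((2*n:ℝ)+3)*((2*n:ℝ)+4) = d * (1+y) := by
    rw [hy, hd]; field_simp; ring
  have h1y : 1 + y ≤ exp y := by linarith [add_one_le_exp y]
  have hyK : y * (n*(n+1)) ≤ (2*n:ℝ)+2 := by
    rw [hy, div_mul_eq_mul_div, div_le_iff₀ hdpos, hd]
    push_cast
    nlinarith [sq_nonneg ((n:ℝ)+1), (Nat.one_le_cast (α := ℝ)).mpr hn]
  calc (((2*n:ℝ)+3)*((2*n:ℝ)+4))^(n*(n+1)) = d^(n*(n+1)) * (1+y)^(n*(n+1)) := by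
        rw [hc, mul_pow]
    _ ≤ d^(n*(n+1)) * (exp y)^(n*(n+1)) := by
        apply mul_le_mul_of_nonneg_left (pow_le_pow_left₀ (by positivity) h1y _) (by positivity)
    _ = d^(n*(n+1)) * exp (y * (n*(n+1))) := by
        rw [← exp_nat_mul]
        congr 2
        push_cast
        ring
    _ ≤ d^(n*(n+1)) * exp ((2*n:ℝ)+2) := by
        apply mul_le_mul_of_nonneg_left (exp_le_exp.mpr hyK) (by positivity)
    _ = d^(n*(n+1)) * (exp 1)^(2*n+2) := by
        rw [← exp_nat_mul]; norm_num


private lemma star (n : ℕ) (hn : 1 ≤ n) :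
    (4/π)^2 * ((Nat.factorial (2*n) : ℝ))^2 * (((2*n:ℝ)+3)*((2*n:ℝ)+4))^(n*(n+1))
      * (1 + ((3:ℝ)^(2*n+3))⁻¹)^(2*n*(n+2))
      ≤ (((2*n:ℝ)+1)*((2*n:ℝ)+2))^(n*(n+3)) := by
  have hπ : (3.1415:ℝ) < π := by linarith [pi_gt_d6]
  have hp : (4/π:ℝ)^2 ≤ (4/3.1415)^2 := by gcongr <;> norm_num
  have key : (4/π)^2 * ((Nat.factorial (2*n) : ℝ))^2 * (((2*n:ℝ)+3)*((2*n:ℝ)+4))^(n*(n+1))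
      * (1 + ((3:ℝ)^(2*n+3))⁻¹)^(2*n*(n+2))
      ≤ (4/3.1415)^2 * ((Nat.factorial (2*n) : ℝ))^2 * (((2*n:ℝ)+3)*((2*n:ℝ)+4))^(n*(n+1)) * (40/39) := by
    have h1 := delta_bound n hn
    have h2 : (0:ℝ) ≤ ((Nat.factorial (2*n) : ℝ))^2 * (((2*n:ℝ)+3)*((2*n:ℝ)+4))^(n*(n+1)) := by positivity
    nlinarith [pow_nonneg (by positivity : (0:ℝ) ≤ 1 + ((3:ℝ)^(2*n+3))⁻¹) (2*n*(n+2)),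
      mul_le_mul_of_nonneg_right hp h2,
      mul_le_mul_of_nonneg_left h1 (by positivity : (0:ℝ) ≤ (4/3.1415:ℝ)^2 * ((Nat.factorial (2*n) : ℝ))^2 * (((2*n:ℝ)+3)*((2*n:ℝ)+4))^(n*(n+1)))]
  refine key.trans ?_
  rcases le_or_gt n 3 with h3 | h4
  · interval_cases n <;> norm_num [Nat.factorial] <;> nlinarith []
  · -- general case n ≥ 4
    have hn4 : 4 ≤ n := h4
    have hE1 : exp 1 ≤ (2.7183:ℝ) := by
      have := exp_one_lt_d9
      linarith
    have hEpos : (0:ℝ) < 2.7183 := by norm_num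
    set d : ℝ := ((2*n:ℝ)+1)*((2*n:ℝ)+2) with hd
    have hdpos : (0:ℝ) < d := by positivity
    have hF : ((Nat.factorial (2*n) : ℝ))^2 ≤ (((2*n:ℝ)+1)^2/4)^(2*n) := by
      have h := fact_sq_le (2*n)
      rw [div_pow, le_div_iff₀ (by positivity)]
      calc ((Nat.factorial (2*n) : ℝ))^2 * 4^(2*n) ≤ ((2*n:ℝ)+1)^(2*(2*n)) := by
            push_cast at h ⊢; linarith
        _ = (((2*n:ℝ)+1)^2)^(2*n) := by rw [← pow_mul]
    have hr := ratio_bound n hn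
    have hrE : (((2*n:ℝ)+3)*((2*n:ℝ)+4))^(n*(n+1)) ≤ d^(n*(n+1)) * (2.7183:ℝ)^(2*n+2) := by
      refine hr.trans ?_
      apply mul_le_mul_of_nonneg_left (pow_le_pow_left₀ (by positivity) hE1 _) (by positivity)
    have step1 : (4/3.1415:ℝ)^2 * ((Nat.factorial (2*n) : ℝ))^2 * (((2*n:ℝ)+3)*((2*n:ℝ)+4))^(n*(n+1)) * (40/39)
        ≤ (4/3.1415:ℝ)^2 * (((2*n:ℝ)+1)^2/4)^(2*n) * (d^(n*(n+1)) * (2.7183:ℝ)^(2*n+2)) * (40/39) := by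
      have := mul_le_mul (mul_le_mul_of_nonneg_left hF (by positivity : (0:ℝ) ≤ (4/3.1415:ℝ)^2)) hrE (by positivity) (by positivity)
      nlinarith [this]
    refine step1.trans ?_
    set q : ℝ := ((2*n:ℝ)+1)^2*2.7183/4 with hq
    have hqpos : 0 < q := by positivity
    have hC : (4/3.1415:ℝ)^2 * (40/39) * 2.7183^2 ≤ (4/2.7183:ℝ)^(2*n) := by
      calc (4/3.1415:ℝ)^2 * (40/39) * 2.7183^2 ≤ (4/2.7183:ℝ)^8 := by norm_num
        _ ≤ (4/2.7183:ℝ)^(2*n) := by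
          apply pow_le_pow_right₀ (by norm_num) (by omega)
    have hsplit : d^(n*(n+3)) = d^(n*(n+1)) * d^(2*n) := by
      rw [← pow_add]; ring_nf
    rw [hsplit]
    have hqd : (4/2.7183:ℝ)^(2*n) * q^(2*n) ≤ d^(2*n) := by
      rw [← mul_pow]
      apply pow_le_pow_left₀ (by positivity)
      rw [hq, hd]
      nlinarith [sq_nonneg ((2*n:ℝ)+1), Nat.cast_nonneg (α := ℝ) n]
    have hfin : (4/3.1415:ℝ)^2 * (((2*n:ℝ)+1)^2/4)^(2*n) * (2.7183:ℝ)^(2*n+2) * (40/39) ≤ d^(2*n) := by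
      have hqe : (4/3.1415:ℝ)^2 * (((2*n:ℝ)+1)^2/4)^(2*n) * (2.7183:ℝ)^(2*n+2) * (40/39)
          = ((4/3.1415:ℝ)^2 * (40/39) * 2.7183^2) * q^(2*n) := by
        rw [hq, pow_add]
        have he : ((2*n:ℝ)+1)^2*2.7183/4 = (((2*n:ℝ)+1)^2/4)*2.7183 := by ring
        rw [he, mul_pow]
        ring
      rw [hqe]
      calc ((4/3.1415:ℝ)^2 * (40/39) * 2.7183^2) * q^(2*n)
          ≤ (4/2.7183:ℝ)^(2*n) * q^(2*n) := by
            apply mul_le_mul_of_nonneg_right hC (by positivity)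
        _ ≤ d^(2*n) := hqd
    calc (4/3.1415:ℝ)^2 * (((2*n:ℝ)+1)^2/4)^(2*n) * (d^(n*(n+1)) * (2.7183:ℝ)^(2*n+2)) * (40/39)
        = ((4/3.1415:ℝ)^2 * (((2*n:ℝ)+1)^2/4)^(2*n) * (2.7183:ℝ)^(2*n+2) * (40/39)) * d^(n*(n+1)) := by ring
      _ ≤ d^(2*n) * d^(n*(n+1)) := by
          apply mul_le_mul_of_nonneg_right hfin (by positivity)
      _ = d^(n*(n+1)) * d^(2*n) := by ring


private lemma main_core (p F c d y : ℝ) (hp : 0 < p) (hF : 0 < F) (hc : 0 < c)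
    (hd : 0 < d) (hy : 0 < y) (n : ℕ)
    (hstar : p^2*F^2*c^(n*(n+1))*y^(2*n*(n+2)) ≤ d^(n*(n+3))) :
    (p^(2*n+5)*(F*(d*c)))^(n*(n+1)) * (p^(2*n+1)*F)^((n+1)*(n+2))
      ≤ (p^(2*n+3)*(F*d)/y)^(2*n*(n+2)) := by
  rw [div_pow, le_div_iff₀ (by positivity)]
  have hG : (0:ℝ) ≤ p^((2*n+3)*(2*n*(n+2))) * F^(2*n*(n+2)) * d^(n*(n+1)) := by positivity
  calc (p^(2*n+5) * (F * (d * c)))^(n*(n+1)) * (p^(2*n+1) * F)^((n+1)*(n+2)) * y^(2*n*(n+2))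
      = (p^((2*n+3)*(2*n*(n+2))) * F^(2*n*(n+2)) * d^(n*(n+1)))
        * (p^2 * F^2 * c^(n*(n+1)) * y^(2*n*(n+2))) := by ring
    _ ≤ (p^((2*n+3)*(2*n*(n+2))) * F^(2*n*(n+2)) * d^(n*(n+1))) * d^(n*(n+3)) := by
        exact mul_le_mul_of_nonneg_left hstar hG
    _ = (p^(2*n+3) * (F * d))^(2*n*(n+2)) := by ring

private lemma main_ineq (n : ℕ) (hn : 1 ≤ n) :
    (4^(2*(n+2)+1) * (Nat.factorial (2*(n+2)) : ℝ) / π^(2*(n+2)+1))^(n*(n+1)) *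
      (4^(2*n+1) * (Nat.factorial (2*n) : ℝ) / π^(2*n+1))^((n+1)*(n+2))
      ≤ ((4^(2*(n+1)+1) * (Nat.factorial (2*(n+1)) : ℝ) / π^(2*(n+1)+1)) /
          (1 + ((3:ℝ)^(2*(n+1)+1))⁻¹))^(2*n*(n+2)) := by
  have hπ : (0:ℝ) < π := pi_pos
  have hidx : 2*(n+1)+1 = 2*n+3 := by ring
  rw [hidx]
  have hfac1 : (Nat.factorial (2*(n+1)) : ℝ)
      = (Nat.factorial (2*n) : ℝ) * (((2*n:ℝ)+1)*((2*n:ℝ)+2)) := by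
    have h1 : 2*(n+1) = (2*n+1)+1 := by ring
    rw [h1, Nat.factorial_succ, Nat.factorial_succ]
    push_cast
    ring
  have hfac2 : (Nat.factorial (2*(n+2)) : ℝ)
      = (Nat.factorial (2*n) : ℝ) * ((((2*n:ℝ)+1)*((2*n:ℝ)+2)) * (((2*n:ℝ)+3)*((2*n:ℝ)+4))) := by
    have h1 : 2*(n+2) = (((2*n+1)+1)+1)+1 := by ring
    rw [h1, Nat.factorial_succ, Nat.factorial_succ, Nat.factorial_succ, Nat.factorial_succ]
    push_cast
    ring
  have hA2 : (4:ℝ)^(2*(n+2)+1) * (Nat.factorial (2*(n+2)) : ℝ) / π^(2*(n+2)+1)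
      = (4/π)^(2*n+5) * ((Nat.factorial (2*n) : ℝ) * ((((2*n:ℝ)+1)*((2*n:ℝ)+2)) * (((2*n:ℝ)+3)*((2*n:ℝ)+4)))) := by
    rw [hfac2, div_pow]
    have h5 : 2*(n+2)+1 = 2*n+5 := by ring
    rw [h5]
    field_simp
  have hA0 : (4:ℝ)^(2*n+1) * (Nat.factorial (2*n) : ℝ) / π^(2*n+1)
      = (4/π)^(2*n+1) * (Nat.factorial (2*n) : ℝ) := by
    rw [div_pow]
    field_simp
  have hA1 : (4:ℝ)^(2*n+3) * (Nat.factorial (2*(n+1)) : ℝ) / π^(2*n+3)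
      = (4/π)^(2*n+3) * ((Nat.factorial (2*n) : ℝ) * (((2*n:ℝ)+1)*((2*n:ℝ)+2))) := by
    rw [hfac1, div_pow]
    field_simp
  rw [hA0, hA1, hA2]
  have hstar := star n hn
  exact main_core (4/π) (Nat.factorial (2*n) : ℝ) (((2*n:ℝ)+3)*((2*n:ℝ)+4))
    (((2*n:ℝ)+1)*((2*n:ℝ)+2)) (1 + ((3:ℝ)^(2*n+3))⁻¹)
    (by positivity) (by positivity) (by positivity) (by positivity) (by positivity) n
    (by calc (4/π)^2*((Nat.factorial (2*n):ℝ))^2*((((2*n:ℝ)+3)*((2*n:ℝ)+4)))^(n*(n+1))*(1 + ((3:ℝ)^(2*n+3))⁻¹)^(2*n*(n+2))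
          = (4/π)^2 * ((Nat.factorial (2*n) : ℝ))^2 * (((2*n:ℝ)+3)*((2*n:ℝ)+4))^(n*(n+1))
            * (1 + ((3:ℝ)^(2*n+3))⁻¹)^(2*n*(n+2)) := by ring
      _ ≤ _ := hstar)

private lemma rpow_inv_pow (x : ℝ) (hx : 0 ≤ x) (k e : ℕ) (hk : k ≠ 0) :
    (x ^ ((k:ℝ)⁻¹)) ^ (k*e) = x ^ e := by
  rw [← rpow_natCast (x ^ ((k:ℝ)⁻¹)) (k*e), ← rpow_mul hx]
  have h : ((k:ℝ))⁻¹ * ((k*e : ℕ):ℝ) = ((e:ℕ):ℝ) := by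
    push_cast
    field_simp
  rw [h, rpow_natCast]

private lemma step_lemma (E : ℕ → ℝ) (B : ℕ → ℝ) (hB : ∀ k, B k = |E (2*k)|) (n : ℕ) (hn : 1 ≤ n)
    (hBpos : ∀ k, 1 ≤ k → 0 < B k)
    (key : B (n+2) ^ (n*(n+1)) * B n ^ ((n+1)*(n+2)) < B (n+1) ^ (2*n*(n+2))) :
    |E (2*(n+1)+2)| ^ (((n+1:ℕ):ℝ)+1)⁻¹ / |E (2*(n+1))| ^ (((n+1:ℕ):ℝ))⁻¹
      < |E (2*n+2)| ^ (((n:ℕ):ℝ)+1)⁻¹ / |E (2*n)| ^ (((n:ℕ):ℝ))⁻¹ := by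
  have h1 : (2*(n+1)+2) = 2*(n+2) := by ring
  have h2 : (2*n+2) = 2*(n+1) := by ring
  rw [h1, h2]
  simp only [← hB]
  have c1 : (((n:ℕ):ℝ)+1)⁻¹ = (((n+1:ℕ):ℝ))⁻¹ := by push_cast; ring
  have c2 : (((n+1:ℕ):ℝ)+1)⁻¹ = (((n+2:ℕ):ℝ))⁻¹ := by push_cast; ring
  rw [c1, c2]
  have hp0 := hBpos n hn
  have hp1 := hBpos (n+1) (by omega)
  have hp2 := hBpos (n+2) (by omega)
  set N : ℕ := n*(n+1)*(n+2) with hN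
  have hgoal2 : (B (n+2) ^ (((n+2:ℕ):ℝ))⁻¹ / B (n+1) ^ (((n+1:ℕ):ℝ))⁻¹) ^ N
      < (B (n+1) ^ (((n+1:ℕ):ℝ))⁻¹ / B n ^ (((n:ℕ):ℝ))⁻¹) ^ N := by
    rw [div_pow, div_pow]
    have e2 : (B (n+2) ^ (((n+2:ℕ):ℝ))⁻¹) ^ N = B (n+2) ^ (n*(n+1)) := by
      have : N = (n+2)*(n*(n+1)) := by rw [hN]; ring
      rw [this]; exact rpow_inv_pow _ hp2.le _ _ (by omega)
    have e1 : (B (n+1) ^ (((n+1:ℕ):ℝ))⁻¹) ^ N = B (n+1) ^ (n*(n+2)) := by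
      have : N = (n+1)*(n*(n+2)) := by rw [hN]; ring
      rw [this]; exact rpow_inv_pow _ hp1.le _ _ (by omega)
    have e0 : (B n ^ (((n:ℕ):ℝ))⁻¹) ^ N = B n ^ ((n+1)*(n+2)) := by
      have : N = n*((n+1)*(n+2)) := by rw [hN]; ring
      rw [this]; exact rpow_inv_pow _ hp0.le _ _ (by omega)
    rw [e2, e1, e0]
    rw [div_lt_div_iff₀ (by positivity) (by positivity)]
    calc B (n+2) ^ (n*(n+1)) * B n ^ ((n+1)*(n+2)) < B (n+1) ^ (2*n*(n+2)) := key
      _ = B (n+1) ^ (n*(n+2)) * B (n+1) ^ (n*(n+2)) := by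
          rw [← pow_add]; ring_nf
  exact lt_of_pow_lt_pow_left₀ N (by positivity) hgoal2

open Real in
theorem euler_root_ratio_strictAnti (E : ℕ → ℝ)
    (hE : ∀ n : ℕ, 1 ≤ n →
      (4 ^ (2 * n + 1) * (Nat.factorial (2 * n) : ℝ) / π ^ (2 * n + 1)) /
          (1 + ((3 : ℝ) ^ (2 * n + 1))⁻¹) < |E (2 * n)| ∧
        |E (2 * n)| < 4 ^ (2 * n + 1) * (Nat.factorial (2 * n) : ℝ) / π ^ (2 * n + 1)) :
    StrictAntiOn
      (fun n : ℕ =>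
        |E (2 * n + 2)| ^ (((n : ℝ) + 1)⁻¹) / |E (2 * n)| ^ ((n : ℝ)⁻¹))
      {n : ℕ | 1 ≤ n} := by
  apply strictAntiOn_aux
  intro n hn
  have hBpos : ∀ k, 1 ≤ k → 0 < |E (2*k)| := fun k hk =>
    lt_of_le_of_lt (by positivity) (hE k hk).1
  have hb0 := hE n hn
  have hb1 := hE (n+1) (by omega)
  have hb2 := hE (n+2) (by omega)
  have key : |E (2*(n+2))| ^ (n*(n+1)) * |E (2*n)| ^ ((n+1)*(n+2))
      < |E (2*(n+1))| ^ (2*n*(n+2)) := by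
    calc |E (2*(n+2))| ^ (n*(n+1)) * |E (2*n)| ^ ((n+1)*(n+2))
        < (4^(2*(n+2)+1) * (Nat.factorial (2*(n+2)) : ℝ) / π^(2*(n+2)+1))^(n*(n+1)) *
            (4^(2*n+1) * (Nat.factorial (2*n) : ℝ) / π^(2*n+1))^((n+1)*(n+2)) := by
          apply mul_lt_mul''
          · exact pow_lt_pow_left₀ hb2.2 (abs_nonneg _) (by positivity)
          · exact pow_lt_pow_left₀ hb0.2 (abs_nonneg _) (by positivity)
          · positivity
          · positivity
      _ ≤ ((4^(2*(n+1)+1) * (Nat.factorial (2*(n+1)) : ℝ) / π^(2*(n+1)+1)) /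
            (1 + ((3:ℝ)^(2*(n+1)+1))⁻¹))^(2*n*(n+2)) := main_ineq n hn
      _ < |E (2*(n+1))| ^ (2*n*(n+2)) := by
          apply pow_lt_pow_left₀ hb1.1 (by positivity)
          have : 1 ≤ n := hn
          positivity
  exact step_lemma E (fun k => |E (2*k)|) (fun k => rfl) n hn
    (fun k hk => hBpos k hk) key
end

section
/- For every natural number n ≥ 1, log((n+2))/(n+2) - 2·log(n+1)/(n+1) + log(n)/n ≤ (2·log n + 4)/(n(n+1)(n+2)). -/
theorem log_second_diff_le (n : ℕ) (hn : 1 ≤ n) :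
    Real.log ((n : ℝ) + 2) / ((n : ℝ) + 2) - 2 * Real.log ((n : ℝ) + 1) / ((n : ℝ) + 1) +
        Real.log n / n ≤
      (2 * Real.log n + 4) / ((n : ℝ) * ((n : ℝ) + 1) * ((n : ℝ) + 2)) := by
  set x : ℝ := (n : ℝ) with hxdef
  have hx : (1 : ℝ) ≤ x := Nat.one_le_cast.mpr hn
  have hx0 : (0 : ℝ) < x := by linarith
  have h1 : (0 : ℝ) < x + 1 := by linarith
  have h2 : (0 : ℝ) < x + 2 := by linarith
  have hD : (0 : ℝ) < x * (x + 1) * (x + 2) := by positivity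
  have hab : Real.log x ≤ Real.log (x + 1) := Real.log_le_log hx0 (by linarith)
  have hconc : Real.log x + Real.log (x + 2) ≤ 2 * Real.log (x + 1) := by
    have hm : Real.log x + Real.log (x + 2) = Real.log (x * (x + 2)) :=
      (Real.log_mul (ne_of_gt hx0) (ne_of_gt h2)).symm
    rw [hm]
    have hle : x * (x + 2) ≤ (x + 1) ^ 2 := by nlinarith
    calc Real.log (x * (x + 2)) ≤ Real.log ((x + 1) ^ 2) :=
          Real.log_le_log (by positivity) hle
      _ = 2 * Real.log (x + 1) := by
          rw [Real.log_pow]; push_cast; ring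
  rw [le_div_iff₀ hD]
  have hEq : (Real.log (x + 2) / (x + 2) - 2 * Real.log (x + 1) / (x + 1) + Real.log x / x) *
      (x * (x + 1) * (x + 2)) =
      x * (x + 1) * Real.log (x + 2) - 2 * (x * (x + 2)) * Real.log (x + 1) +
        (x + 1) * (x + 2) * Real.log x := by
    field_simp
  rw [hEq]
  nlinarith [mul_le_mul_of_nonneg_left hconc (le_of_lt (mul_pos hx0 h1)),
    mul_le_mul_of_nonneg_left hab (le_of_lt hx0), hx0.le, h1.le, h2.le]
end

section
/- Define v_n = log|B_{2n}| where B_{2n} is the 2n-th Bernoulli number. Then for all n ≥ 3, v_{n+1}/(n+1) - v_n/n ≥ 1/n - log(n+1)/(2n²) - log(16π)/(2n(n+1)) - 1/(12n²) - 6/(2^{2n} n), and in particular v_{n+1}/(n+1) > v_n/n. -/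
open Real in
/-- `v n = log |B_{2n}|`, with `B_k` the Bernoulli numbers. -/
noncomputable def vBern (n : ℕ) : ℝ := Real.log |((bernoulli (2 * n) : ℚ) : ℝ)|

open Real

noncomputable def Sz (k : ℕ) : ℝ := ∑' n : ℕ, 1 / (n : ℝ) ^ (2 * k)

lemma Sz_hasSum {k : ℕ} (hk : k ≠ 0) :
    HasSum (fun n : ℕ => 1 / (n : ℝ) ^ (2 * k)) (Sz k) :=
  (hasSum_zeta_nat hk).summable.hasSum

lemma one_le_Sz {k : ℕ} (hk : k ≠ 0) : 1 ≤ Sz k := by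
  have h := le_hasSum (Sz_hasSum hk) 1 (fun j _ => by positivity)
  simpa using h

lemma Sz_pos {k : ℕ} (hk : k ≠ 0) : 0 < Sz k := lt_of_lt_of_le one_pos (one_le_Sz hk)

lemma Sz_le {k : ℕ} (hk : k ≠ 0) : Sz k ≤ 1 + 4 / 2 ^ (2 * k) := by
  have h2 : HasSum (fun n : ℕ => 1 / ((n + 2 : ℕ) : ℝ) ^ (2 * k)) (Sz k - 1) := by
    have := (hasSum_nat_add_iff' (f := fun n : ℕ => 1 / (n : ℝ) ^ (2 * k)) 2).2 (Sz_hasSum hk)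
    simpa [Finset.sum_range_succ, zero_pow (by omega : 2 * k ≠ 0)] using this
  have hg : HasSum (fun n : ℕ => (4 / 2 ^ (2 * k)) * (1 / ((n + 2 : ℕ) : ℝ) ^ 2))
      ((4 / 2 ^ (2 * k)) * (π ^ 2 / 6 - 1)) := by
    have := (hasSum_nat_add_iff' (f := fun n : ℕ => 1 / (n : ℝ) ^ 2) 2).2 hasSum_zeta_two
    have h' : HasSum (fun n : ℕ => 1 / ((n + 2 : ℕ) : ℝ) ^ 2) (π ^ 2 / 6 - 1) := by
      simpa [Finset.sum_range_succ] using this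
    exact h'.mul_left _
  have hle : Sz k - 1 ≤ (4 / 2 ^ (2 * k)) * (π ^ 2 / 6 - 1) := by
    refine hasSum_le (fun n => ?_) h2 hg
    have hx : (2 : ℝ) ≤ ((n + 2 : ℕ) : ℝ) := by push_cast; linarith [Nat.cast_nonneg (α := ℝ) n]
    have hx0 : (0 : ℝ) < ((n + 2 : ℕ) : ℝ) := by linarith
    have hpow : (2 : ℝ) ^ (2 * (k - 1)) ≤ ((n + 2 : ℕ) : ℝ) ^ (2 * (k - 1)) :=
      pow_le_pow_left₀ (by norm_num) hx _
    have hsplit : ((n + 2 : ℕ) : ℝ) ^ (2 * k)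
        = ((n + 2 : ℕ) : ℝ) ^ (2 * (k - 1)) * ((n + 2 : ℕ) : ℝ) ^ 2 := by
      rw [← pow_add]; congr 1; omega
    have hsplit2 : (2 : ℝ) ^ (2 * k) = (2 : ℝ) ^ (2 * (k - 1)) * 4 := by
      rw [show (4:ℝ) = 2^2 by norm_num, ← pow_add]; congr 1; omega
    rw [div_mul_div_comm, mul_one, div_le_div_iff₀ (by positivity) (by positivity)]
    calc (1 : ℝ) * (2 ^ (2 * k) * ((n + 2 : ℕ) : ℝ) ^ 2)
        = (2 : ℝ) ^ (2 * (k - 1)) * ((n + 2 : ℕ) : ℝ) ^ 2 * 4 := by rw [hsplit2]; ring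
      _ ≤ ((n + 2 : ℕ) : ℝ) ^ (2 * (k - 1)) * ((n + 2 : ℕ) : ℝ) ^ 2 * 4 := by
          have := sq_nonneg ((n + 2 : ℕ) : ℝ); nlinarith
      _ = ((n + 2 : ℕ) : ℝ) ^ (2 * k) * 4 := by rw [hsplit]
      _ = 4 * ((n + 2 : ℕ) : ℝ) ^ (2 * k) := by ring
  have hpi : π ^ 2 / 6 - 1 ≤ 1 := by nlinarith [pi_lt_d2, pi_pos]
  have hc : (0:ℝ) ≤ 4 / 2 ^ (2 * k) := by positivity
  nlinarith [mul_le_mul_of_nonneg_left hpi hc]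

lemma vBern_eq {k : ℕ} (hk : k ≠ 0) :
    vBern k = Real.log 2 + Real.log ((2 * k).factorial : ℝ) + Real.log (Sz k)
      - (2 * (k : ℝ)) * (Real.log 2 + Real.log π) := by
  have hS1 : (1:ℝ) ≤ Sz k := one_le_Sz hk
  have hS0 : (0:ℝ) < Sz k := lt_of_lt_of_le one_pos hS1
  have hfac : (0:ℝ) < ((2 * k).factorial : ℝ) := by exact_mod_cast (2 * k).factorial_pos
  have hSz : Sz k = (-1 : ℝ) ^ (k + 1) * (2 : ℝ) ^ (2 * k - 1) * π ^ (2 * k) *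
      ((bernoulli (2 * k) : ℚ) : ℝ) / ((2 * k).factorial : ℝ) := (hasSum_zeta_nat hk).tsum_eq
  set B : ℝ := ((bernoulli (2 * k) : ℚ) : ℝ) with hB
  have e : Sz k * ((2 * k).factorial : ℝ)
      = (-1 : ℝ) ^ (k + 1) * (2 : ℝ) ^ (2 * k - 1) * π ^ (2 * k) * B := by
    rw [hSz]; field_simp
  have e2 : Sz k * ((2 * k).factorial : ℝ) = (2 : ℝ) ^ (2 * k - 1) * π ^ (2 * k) * |B| := by
    have h := congrArg abs e
    rwa [abs_of_nonneg (by positivity), abs_mul, abs_mul, abs_mul, abs_pow, abs_neg, abs_one,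
      one_pow, one_mul, abs_of_nonneg (le_of_lt (pow_pos two_pos _)),
      abs_of_nonneg (le_of_lt (pow_pos pi_pos _))] at h
  have hpow : (2 : ℝ) ^ (2 * k) = 2 * (2 : ℝ) ^ (2 * k - 1) := by
    rw [← pow_succ']; congr 1; omega
  have habs : |B| = 2 * ((2 * k).factorial : ℝ) * Sz k / ((2 : ℝ) ^ (2 * k) * π ^ (2 * k)) := by
    rw [hpow, eq_div_iff (by positivity)]
    nlinarith [e2, sq_nonneg ((2:ℝ) ^ (2*k-1)), pow_pos pi_pos (2*k),
      pow_pos (two_pos (α := ℝ)) (2*k-1)]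
  have hv : vBern k = Real.log |B| := rfl
  rw [hv, habs, log_div (by positivity) (by positivity), log_mul (by positivity) hS0.ne',
    log_mul (by norm_num) hfac.ne', log_mul (by positivity) (by positivity), log_pow, log_pow]
  push_cast
  ring

lemma fact_le_aux : ∀ m : ℕ, 1 ≤ m → ((m.factorial : ℝ)) ≤ (m : ℝ) ^ (m + 1) * Real.exp (1 - m) := by
  intro m hm
  induction m, hm using Nat.le_induction with
  | base => simp [Nat.factorial]
  | succ m hm ih =>
    have hm0 : (0:ℝ) < (m:ℝ) := by exact_mod_cast hm
    have hm1 : (0:ℝ) < (m:ℝ) + 1 := by linarith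
    have hxa : (m:ℝ) / ((m:ℝ)+1) ≤ Real.exp (-(1/((m:ℝ)+1))) := by
      have h := Real.add_one_le_exp (-(1/((m:ℝ)+1)))
      have he : (m:ℝ)/((m:ℝ)+1) = -(1/((m:ℝ)+1)) + 1 := by field_simp; ring
      linarith [he ▸ h]
    have hee : Real.exp (-(1/((m:ℝ)+1))) * Real.exp (1/((m:ℝ)+1)) = 1 := by
      rw [← Real.exp_add]; simp
    have hxa' : (m:ℝ) ≤ Real.exp (-(1/((m:ℝ)+1))) * ((m:ℝ)+1) := by
      rw [← div_le_iff₀ hm1]; exact hxa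
    have h1 : Real.exp (1/((m:ℝ)+1)) * (m:ℝ) ≤ (m:ℝ) + 1 := by
      calc Real.exp (1/((m:ℝ)+1)) * (m:ℝ)
          ≤ Real.exp (1/((m:ℝ)+1)) * (Real.exp (-(1/((m:ℝ)+1))) * ((m:ℝ)+1)) :=
            mul_le_mul_of_nonneg_left hxa' (Real.exp_pos _).le
        _ = (Real.exp (-(1/((m:ℝ)+1))) * Real.exp (1/((m:ℝ)+1))) * ((m:ℝ)+1) := by ring
        _ = (m:ℝ) + 1 := by rw [hee, one_mul]
    have h1' : Real.exp (1/((m:ℝ)+1)) ≤ ((m:ℝ)+1) / (m:ℝ) := by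
      rw [le_div_iff₀ hm0]; exact h1
    have h2 : Real.exp 1 = (Real.exp (1/((m:ℝ)+1))) ^ (m + 1) := by
      rw [← Real.exp_nat_mul]
      congr 1
      push_cast
      field_simp
    have h3 : Real.exp 1 ≤ (((m:ℝ)+1) / (m:ℝ)) ^ (m+1) := by
      rw [h2]; exact pow_le_pow_left₀ (Real.exp_pos _).le h1' _
    have h4 : Real.exp 1 * (m:ℝ) ^ (m+1) ≤ ((m:ℝ)+1) ^ (m+1) := by
      rw [div_pow] at h3
      rw [← le_div_iff₀ (pow_pos hm0 _)] at *
      exact h3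
    have hfact : ((m+1).factorial : ℝ) = ((m:ℝ)+1) * (m.factorial : ℝ) := by
      rw [Nat.factorial_succ]; push_cast; ring
    have key : ((m:ℝ)+1) * ((m:ℝ) ^ (m+1) * Real.exp (1 - m)) ≤
        ((m:ℝ)+1) ^ (m+2) * Real.exp (1 - ((m:ℕ)+1:ℝ)) := by
      have hexp : Real.exp (1 - ((m:ℕ)+1:ℝ)) = Real.exp (1 - (m:ℝ)) * Real.exp (-1) := by
        rw [← Real.exp_add]; ring_nf
      rw [hexp]
      have hinv : Real.exp (-1) = (Real.exp 1)⁻¹ := Real.exp_neg 1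
      have he1 : (0:ℝ) < Real.exp 1 := Real.exp_pos 1
      have hx : (m:ℝ) ^ (m+1) ≤ ((m:ℝ)+1) ^ (m+1) * Real.exp (-1) := by
        rw [hinv, ← div_eq_mul_inv, le_div_iff₀ he1]
        nlinarith [h4]
      calc ((m:ℝ)+1) * ((m:ℝ) ^ (m+1) * Real.exp (1 - m))
          ≤ ((m:ℝ)+1) * (((m:ℝ)+1) ^ (m+1) * Real.exp (-1) * Real.exp (1 - m)) := by
            have h5 := mul_le_mul_of_nonneg_right hx (Real.exp_pos (1 - (m:ℝ))).le
            nlinarith [mul_le_mul_of_nonneg_left h5 hm1.le]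
        _ = ((m:ℝ)+1) ^ (m+2) * (Real.exp (1 - (m:ℝ)) * Real.exp (-1)) := by ring
    calc ((m+1).factorial : ℝ) = ((m:ℝ)+1) * (m.factorial : ℝ) := hfact
      _ ≤ ((m:ℝ)+1) * ((m:ℝ) ^ (m+1) * Real.exp (1 - m)) := by
          have := mul_le_mul_of_nonneg_left ih (le_of_lt hm1); linarith
      _ ≤ ((m:ℝ)+1) ^ (m+2) * Real.exp (1 - ((m:ℕ)+1:ℝ)) := key
      _ = (((m+1:ℕ)):ℝ) ^ ((m+1) + 1) * Real.exp (1 - ((m+1:ℕ):ℝ)) := by push_cast; ring_nf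

lemma nat16 : ∀ n : ℕ, 3 ≤ n → 16 * (n + 1) ≤ 2 ^ (2 * n) := by
  intro n hn
  induction n, hn using Nat.le_induction with
  | base => norm_num
  | succ n hn ih =>
    have h16 : 16 ≤ 2 ^ (2 * n) := by
      calc 16 = 2 ^ 4 := by norm_num
        _ ≤ 2 ^ (2 * n) := Nat.pow_le_pow_right (by norm_num) (by omega)
    have h4 : 2 ^ (2 * (n + 1)) = 4 * 2 ^ (2 * n) := by ring
    omega

set_option maxHeartbeats 2000000 in
open Real in
theorem bernoulli_first_diff_bound (n : ℕ) (hn : 3 ≤ n) :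
    vBern (n + 1) / ((n : ℝ) + 1) - vBern n / n ≥
        1 / (n : ℝ) - Real.log ((n : ℝ) + 1) / (2 * (n : ℝ) ^ 2) -
          Real.log (16 * π) / (2 * (n : ℝ) * ((n : ℝ) + 1)) - 1 / (12 * (n : ℝ) ^ 2) -
          6 / (2 ^ (2 * n) * (n : ℝ)) ∧
      vBern (n + 1) / ((n : ℝ) + 1) > vBern n / n := by
  have hn0 : n ≠ 0 := by omega
  have hn1 : n + 1 ≠ 0 := by omega
  set c : ℝ := (n : ℝ) with hcdef
  have hc3 : (3:ℝ) ≤ c := by rw [hcdef]; exact_mod_cast hn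
  have hc0 : (0:ℝ) < c := by linarith
  have hc1 : (0:ℝ) < c + 1 := by linarith
  set l2 : ℝ := Real.log 2 with hl2def
  set lp : ℝ := Real.log π with hlpdef
  set ln : ℝ := Real.log c with hlndef
  set ln1 : ℝ := Real.log (c + 1) with hln1def
  set lf : ℝ := Real.log ((2 * n).factorial : ℝ) with hlfdef
  set ls : ℝ := Real.log (Sz n) with hlsdef
  set ls' : ℝ := Real.log (Sz (n + 1)) with hls'def
  set E : ℝ := (2:ℝ) ^ (2 * n) with hEdef
  have hEpos : (0:ℝ) < E := by positivity
  -- key identity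
  have hv1 : vBern n = l2 + lf + ls - (2 * c) * (l2 + lp) := vBern_eq hn0
  have hsplitf : Real.log ((2 * (n+1)).factorial : ℝ)
      = Real.log (2*c+2) + Real.log (2*c+1) + lf := by
    have hfs : ((2 * (n+1)).factorial : ℝ) = (2*c+2) * ((2*c+1) * ((2 * n).factorial : ℝ)) := by
      have h21 : 2 * (n + 1) = (2*n + 1) + 1 := by ring
      rw [h21, Nat.factorial_succ, Nat.factorial_succ]
      push_cast
      ring
    rw [hlfdef, hfs, log_mul (by positivity) (by positivity),
      log_mul (by positivity) (by positivity)]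
    ring
  have hv2 : vBern (n+1) = l2 + (Real.log (2*c+2) + Real.log (2*c+1) + lf) + ls'
      - (2 * (c+1)) * (l2 + lp) := by
    have h := vBern_eq hn1
    rw [hsplitf] at h
    push_cast at h ⊢
    linarith [h]
  have hN : c * vBern (n+1) - (c+1) * vBern n
      = -l2 + c * (Real.log (2*c+2) + Real.log (2*c+1)) - lf + c * ls' - (c+1) * ls := by
    rw [hv1, hv2]; ring
  -- atom bounds
  have hl2a : l2 < 1 := by
    have := Real.log_two_lt_d9; rw [hl2def]; linarith
  have hl2b : (0:ℝ) < l2 := Real.log_pos (by norm_num)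
  have hlp : (1:ℝ) ≤ lp := by
    have h1 := Real.exp_one_lt_d9
    have h2 := Real.pi_gt_d6
    have h3 : Real.exp 1 ≤ π := by linarith
    calc (1:ℝ) = Real.log (Real.exp 1) := (Real.log_exp 1).symm
      _ ≤ lp := Real.log_le_log (Real.exp_pos 1) h3
  have hln : ln ≤ c - 1 := Real.log_le_sub_one_of_pos hc0
  have hln0 : (0:ℝ) ≤ ln := Real.log_nonneg (by linarith)
  have hlnle : ln ≤ ln1 := Real.log_le_log hc0 (by linarith)
  have hls' : (0:ℝ) ≤ ls' := Real.log_nonneg (one_le_Sz hn1)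
  have hE16 : 16 * (c+1) ≤ E := by
    have h := nat16 n hn
    rw [hEdef, hcdef]
    exact_mod_cast h
  have hls_ub : ls ≤ 4 / E := by
    have h1 : ls ≤ Sz n - 1 := Real.log_le_sub_one_of_pos (Sz_pos hn0)
    have h2 := Sz_le hn0
    rw [hEdef]
    linarith
  have hlf : lf ≤ (2*c+1) * (l2 + ln) + 1 - 2*c := by
    have h := fact_le_aux (2*n) (by omega)
    have hfp : (0:ℝ) < ((2*n).factorial : ℝ) := by exact_mod_cast (2*n).factorial_pos
    have hlog := Real.log_le_log hfp h
    rw [Real.log_mul (by positivity) (Real.exp_ne_zero _), Real.log_pow, Real.log_exp] at hlog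
    push_cast at hlog
    rw [Real.log_mul (by norm_num) hc0.ne'] at hlog
    rw [hlfdef]
    push_cast
    linarith [hlog]
  have hLA : Real.log (2*c+2) = l2 + ln1 := by
    rw [show (2*c+2 : ℝ) = 2*(c+1) by ring, Real.log_mul (by norm_num) hc1.ne']
  have hLB : l2 + ln ≤ Real.log (2*c+1) := by
    rw [hl2def, hlndef, ← Real.log_mul (by norm_num) hc0.ne']
    exact Real.log_le_log (by positivity) (by linarith)
  clear_value c l2 lp ln ln1 lf ls ls' E
  -- chain
  have hG : c*ln1 - (c+1)*ln - 2*l2 + 2*c - 1 - 4*(c+1)/E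
      ≤ -l2 + c * (Real.log (2*c+2) + Real.log (2*c+1)) - lf + c * ls' - (c+1) * ls := by
    have h2 : c*(l2+ln) ≤ c*(Real.log (2*c+1)) := mul_le_mul_of_nonneg_left hLB hc0.le
    have h3 : (c+1)*ls ≤ (c+1)*(4/E) := mul_le_mul_of_nonneg_left hls_ub hc1.le
    have h4 : (0:ℝ) ≤ c*ls' := mul_nonneg hc0.le hls'
    have h5 : (c+1)*(4/E) = 4*(c+1)/E := by ring
    rw [hLA]
    nlinarith [hlf, h2, h3, h4, h5]
  have hb : ln/2 ≤ (c+1)*ln1/(2*c) := by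
    have h0 : (0:ℝ) ≤ ln1 := le_trans hln0 hlnle
    have h1 : c*ln ≤ c*ln1 := mul_le_mul_of_nonneg_left hlnle hc0.le
    rw [div_le_div_iff₀ (by norm_num : (0:ℝ) < 2) (by positivity)]
    linarith [h1, h0]
  have h4E : 4*(c+1)/E ≤ 1/4 := by
    rw [div_le_iff₀ hEpos]; linarith [hE16]
  have hMG : (c+1) - (c+1)*ln1/(2*c) - (4*l2+lp)/2 - (c+1)/(12*c) - 6*(c+1)/E
      ≤ c*ln1 - (c+1)*ln - 2*l2 + 2*c - 1 - 4*(c+1)/E := by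
    have ha : (0:ℝ) ≤ c*(ln1 - ln) := mul_nonneg hc0.le (by linarith)
    have hcc : (0:ℝ) ≤ (c+1)/(12*c) := by positivity
    have hdd : (0:ℝ) ≤ 2*(c+1)/E := by positivity
    set X := (c+1)*ln1/(2*c) with hX
    set Y := (c+1)/(12*c) with hY
    set Z := (c+1)/E with hZ
    have h6 : 6*(c+1)/E = 6*Z := by rw [hZ]; ring
    have h4 : 4*(c+1)/E = 4*Z := by rw [hZ]; ring
    have h2 : 2*(c+1)/E = 2*Z := by rw [hZ]; ring
    rw [h6, h4]
    rw [h2] at hdd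
    linarith [ha, hb, hcc, hdd, hln, hlp, hc3]
  have hcc : (0:ℝ) < c*(c+1) := by positivity
  have hdiff : vBern (n+1)/(c+1) - vBern n/c
      = (c * vBern (n+1) - (c+1) * vBern n)/(c*(c+1)) := by
    field_simp [hc0.ne', hc1.ne']
  have h16π : Real.log (16 * π) = 4*l2 + lp := by
    rw [show (16:ℝ) = 2^4 by norm_num, Real.log_mul (by positivity) pi_pos.ne', Real.log_pow,
      hl2def, hlpdef]
    push_cast; ring
  have hXM : 1 / c - ln1 / (2 * c ^ 2) - Real.log (16 * π) / (2 * c * (c + 1))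
      - 1 / (12 * c ^ 2) - 6 / (E * c)
      = ((c+1) - (c+1)*ln1/(2*c) - (4*l2+lp)/2 - (c+1)/(12*c) - 6*(c+1)/E) / (c*(c+1)) := by
    rw [h16π]
    field_simp
  have hmain : (c+1) - (c+1)*ln1/(2*c) - (4*l2+lp)/2 - (c+1)/(12*c) - 6*(c+1)/E
      ≤ c * vBern (n+1) - (c+1) * vBern n := by
    rw [hN]; linarith [hG, hMG]
  have hNpos : (0:ℝ) < c * vBern (n+1) - (c+1) * vBern n := by
    rw [hN]
    have ha : (0:ℝ) ≤ c*(ln1 - ln) := mul_nonneg hc0.le (by linarith)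
    linarith [hG, ha, hln, hl2a, h4E, hc3]
  constructor
  · rw [ge_iff_le, hXM, hdiff]
    exact div_le_div_of_nonneg_right hmain hcc.le
  · have h2 : (0:ℝ) < (c * vBern (n+1) - (c+1) * vBern n)/(c*(c+1)) := div_pos hNpos hcc
    rw [← hdiff] at h2
    linarith
end

section
/- There exists n₀ such that the sequence of Motzkin numbers satisfies: (M_n^{1/n})_{n ≥ n₀} is strictly increasing. -/
/-- The `n`-th Motzkin number `M_n = ∑_{k=0}^{⌊n/2⌋} C(n,2k) C(2k,k)/(k+1)`. -/
def motzkin (n : ℕ) : ℚ :=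
  ∑ k ∈ Finset.range (n / 2 + 1),
    (n.choose (2 * k) : ℚ) * ((2 * k).choose k : ℚ) / ((k : ℚ) + 1)

/-! Auxiliary definitions: the summand of the Motzkin sum and the
Zeilberger-style telescoping certificate. -/

def mterm (n k : ℕ) : ℚ :=
  (n.choose (2 * k) : ℚ) * ((2 * k).choose k : ℚ) / ((k : ℚ) + 1)

def gcert (n k : ℕ) : ℚ :=
  -4 * k * ((n + 2).choose (2 * k) : ℚ) * ((2 * k).choose k : ℚ) / ((n : ℚ) + 2)

lemma key_ident (n k : ℕ) :
    ((n : ℚ) + 4) * mterm (n + 2) k - (2 * n + 5) * mterm (n + 1) k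
      - (3 * n + 3) * mterm n k = gcert n (k + 1) - gcert n k := by
  rcases le_or_gt (2 * k) n with h | h
  · -- main case 2k ≤ n
    have e1 := Nat.choose_mul_succ_eq n (2 * k)
    have e2 := Nat.choose_mul_succ_eq (n + 1) (2 * k)
    have e3 := Nat.choose_succ_right_eq (n + 2) (2 * k)
    have e4 := Nat.choose_succ_right_eq (n + 2) (2 * k + 1)
    have e5 : (k + 1) * ((2 * k + 2).choose (k + 1)) = 2 * (2 * k + 1) * ((2 * k).choose k) := by
      simpa [Nat.centralBinom, show 2 * (k + 1) = 2 * k + 2 from by ring] using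
        Nat.succ_mul_centralBinom_succ k
    have h1 : 2 * k ≤ n + 1 := by omega
    have h2 : 2 * k ≤ n + 2 := by omega
    have h3 : 2 * k + 1 ≤ n + 2 := by omega
    qify [h1, h2, h3] at e1 e2 e3 e4 e5
    have hq : (2 * k : ℚ) ≤ n := by exact_mod_cast h
    have c1 : ((k : ℚ) + 1) ≠ 0 := by positivity
    have c4 : ((n : ℚ) + 1 - 2 * k) ≠ 0 := by linarith
    have c5 : ((n : ℚ) + 2 - 2 * k) ≠ 0 := by linarith
    have c6 : (2 * (k : ℚ) + 1) ≠ 0 := by positivity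
    have hB : (((n + 1).choose (2 * k) : ℕ) : ℚ)
        = ((n : ℚ) + 1) * (n.choose (2 * k) : ℚ) / ((n : ℚ) + 1 - 2 * k) := by
      field_simp; linarith
    have hC : (((n + 2).choose (2 * k) : ℕ) : ℚ)
        = ((n : ℚ) + 2) * ((n + 1).choose (2 * k) : ℚ) / ((n : ℚ) + 2 - 2 * k) := by
      field_simp; linarith
    have hP : (((n + 2).choose (2 * k + 1) : ℕ) : ℚ)
        = ((n + 2).choose (2 * k) : ℚ) * ((n : ℚ) + 2 - 2 * k) / (2 * (k : ℚ) + 1) := by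
      field_simp; linarith
    have hD : (((n + 2).choose (2 * k + 2) : ℕ) : ℚ)
        = ((n + 2).choose (2 * k + 1) : ℚ) * ((n : ℚ) + 1 - 2 * k) / (2 * (k : ℚ) + 2) := by
      have c7 : (2 * (k : ℚ) + 2) ≠ 0 := by positivity
      field_simp; linarith
    have hE : (((2 * k + 2).choose (k + 1) : ℕ) : ℚ)
        = 2 * (2 * (k : ℚ) + 1) * ((2 * k).choose k : ℚ) / ((k : ℚ) + 1) := by
      field_simp; linarith
    simp only [mterm, gcert, show 2 * (k + 1) = 2 * k + 2 from by ring]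
    rw [hD, hP, hC, hB, hE]
    have c3 : ((n : ℚ) + 2) ≠ 0 := by positivity
    have c2 : ((k : ℚ) + 2) ≠ 0 := by positivity
    push_cast
    field_simp
    ring
  · -- boundary cases 2k > n
    have hz : n.choose (2 * k) = 0 := Nat.choose_eq_zero_of_lt h
    rcases (by omega : 2 * k = n + 1 ∨ 2 * k = n + 2 ∨ n + 3 ≤ 2 * k) with h1 | h1 | h1
    · obtain ⟨j, rfl, rfl⟩ : ∃ j, n = 2 * j + 1 ∧ k = j + 1 := ⟨k - 1, by omega, by omega⟩
      have z1 : (2 * j + 1).choose (2 * (j + 1)) = 0 := Nat.choose_eq_zero_of_lt (by omega)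
      have z2 : (2 * j + 1 + 1).choose (2 * (j + 1)) = 1 := by
        rw [show 2 * j + 1 + 1 = 2 * (j + 1) from by ring, Nat.choose_self]
      have z3 : (2 * j + 1 + 2).choose (2 * (j + 1)) = 2 * j + 3 := by
        rw [show 2 * j + 1 + 2 = 2 * (j + 1) + 1 from by ring]
        rw [Nat.choose_succ_self_right]
      have z4 : (2 * j + 1 + 2).choose (2 * (j + 1 + 1)) = 0 :=
        Nat.choose_eq_zero_of_lt (by omega)
      simp only [mterm, gcert, z1, z2, z3, z4]
      push_cast
      have c1 : ((j : ℚ) + 1 + 1) ≠ 0 := by positivity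
      have c2 : ((j : ℚ) + 1) ≠ 0 := by positivity
      have c3 : (2 * (j : ℚ) + 1 + 2) ≠ 0 := by positivity
      field_simp
      ring
    · obtain ⟨j, rfl, rfl⟩ : ∃ j, n = 2 * j ∧ k = j + 1 := ⟨k - 1, by omega, by omega⟩
      have z1 : (2 * j).choose (2 * (j + 1)) = 0 := Nat.choose_eq_zero_of_lt (by omega)
      have z2 : (2 * j + 1).choose (2 * (j + 1)) = 0 := Nat.choose_eq_zero_of_lt (by omega)
      have z3 : (2 * j + 2).choose (2 * (j + 1)) = 1 := by
        rw [show 2 * j + 2 = 2 * (j + 1) from by ring, Nat.choose_self]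
      have z4 : (2 * j + 2).choose (2 * (j + 1 + 1)) = 0 := Nat.choose_eq_zero_of_lt (by omega)
      simp only [mterm, gcert, z1, z2, z3, z4]
      push_cast
      have c1 : ((j : ℚ) + 1 + 1) ≠ 0 := by positivity
      have c3 : (2 * (j : ℚ) + 2) ≠ 0 := by positivity
      field_simp
      ring
    · have z1 : (n + 1).choose (2 * k) = 0 := Nat.choose_eq_zero_of_lt (by omega)
      have z2 : (n + 2).choose (2 * k) = 0 := Nat.choose_eq_zero_of_lt (by omega)
      have z3 : (n + 2).choose (2 * (k + 1)) = 0 := Nat.choose_eq_zero_of_lt (by omega)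
      simp [mterm, gcert, hz, z1, z2, z3]

lemma motzkin_eq_sum (n N : ℕ) (h : n / 2 + 1 ≤ N) :
    motzkin n = ∑ k ∈ Finset.range N, mterm n k := by
  rw [motzkin]
  apply Finset.sum_subset
  · exact Finset.range_subset_range.2 h
  · intro k _ hk
    simp only [Finset.mem_range, not_lt] at hk
    have : n.choose (2 * k) = 0 := Nat.choose_eq_zero_of_lt (by omega)
    simp [mterm, this]

lemma motzkin_rec (n : ℕ) :
    ((n : ℚ) + 4) * motzkin (n + 2)
      = (2 * n + 5) * motzkin (n + 1) + (3 * n + 3) * motzkin n := by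
  set N := n / 2 + 2 with hN
  rw [motzkin_eq_sum n N (by omega), motzkin_eq_sum (n + 1) N (by omega),
    motzkin_eq_sum (n + 2) N (by omega)]
  have tele : ∑ k ∈ Finset.range N,
      (((n : ℚ) + 4) * mterm (n + 2) k - (2 * n + 5) * mterm (n + 1) k
        - (3 * n + 3) * mterm n k) = gcert n N - gcert n 0 := by
    rw [← Finset.sum_range_sub (gcert n)]
    exact Finset.sum_congr rfl fun k _ => key_ident n k
  have g0 : gcert n 0 = 0 := by simp [gcert]
  have gN : gcert n N = 0 := by
    have : (n + 2).choose (2 * N) = 0 := Nat.choose_eq_zero_of_lt (by omega)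
    simp [gcert, this]
  rw [g0, gN] at tele
  simp only [Finset.sum_sub_distrib, ← Finset.mul_sum] at tele
  linarith

lemma motzkin_one_le (n : ℕ) : 1 ≤ motzkin n := by
  have h0 : (0 : ℕ) ∈ Finset.range (n / 2 + 1) := by simp
  have := Finset.single_le_sum
    (f := fun k : ℕ => (n.choose (2 * k) : ℚ) * ((2 * k).choose k : ℚ) / ((k : ℚ) + 1))
    (fun i _ => by positivity) h0
  simpa [motzkin] using this

lemma motzkin_one : motzkin 1 = 1 := by
  norm_num [motzkin, Finset.sum_range_succ]

lemma motzkin_two : motzkin 2 = 2 := by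
  norm_num [motzkin, Finset.sum_range_succ]

lemma motzkin_three : motzkin 3 = 4 := by
  norm_num [motzkin, Finset.sum_range_succ]

lemma ratio_bounds : ∀ n : ℕ, 2 ≤ n →
    (6 * (n : ℚ) + 3) * motzkin n ≤ (2 * n + 4) * motzkin (n + 1) ∧
    (2 * (n : ℚ) + 7) * motzkin (n + 1) ≤ (6 * n + 12) * motzkin n := by
  intro n hn
  induction n, hn using Nat.le_induction with
  | base => rw [motzkin_two, motzkin_three]; norm_num
  | succ m hm ih =>
    obtain ⟨hA, hB⟩ := ih
    have hrec := motzkin_rec m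
    have p1 := motzkin_one_le (m + 1)
    have p0 := motzkin_one_le m
    have hm' : (2 : ℚ) ≤ (m : ℚ) := by exact_mod_cast hm
    set M0 := motzkin m
    set M1 := motzkin (m + 1)
    set M2 := motzkin (m + 2)
    constructor
    · have keyid : ((6 : ℚ) * m + 12) * ((m : ℚ) + 4) *
          ((2 * m + 6) * M2 - (6 * m + 9) * M1)
          = (2 * m + 6) * (6 * m + 12) *
              (((m : ℚ) + 4) * M2 - ((2 * m + 5) * M1 + (3 * m + 3) * M0))
            + (2 * m + 6) * (3 * m + 3) * ((6 * m + 12) * M0 - (2 * m + 7) * M1)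
            + (36 * m + 54) * M1 := by ring
      have hnn : (0 : ℚ) ≤ (2 * m + 6) * M2 - (6 * m + 9) * M1 := by
        have h1 : (0 : ℚ) ≤ (2 * m + 6) * (3 * m + 3) *
            ((6 * m + 12) * M0 - (2 * m + 7) * M1) := by
          have : (0:ℚ) ≤ (6 * m + 12) * M0 - (2 * m + 7) * M1 := by linarith
          have hc : (0:ℚ) ≤ (2 * m + 6) * (3 * m + 3) := by positivity
          exact mul_nonneg hc this
        nlinarith [keyid, hrec, h1, p1, hm']
      push_cast
      linarith
    · have keyid : ((2 : ℚ) * m + 4) * ((m : ℚ) + 4) *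
          ((6 * m + 18) * M1 - (2 * m + 9) * M2)
          = (2 * m + 4) * (2 * m + 9) *
              ((2 * m + 5) * M1 + (3 * m + 3) * M0 - ((m : ℚ) + 4) * M2)
            + (2 * m ^ 2 + 14 * m + 27) * ((2 * m + 4) * M1 - (6 * m + 3) * M0)
            + (18 * m - 27) * M0 := by ring
      have hnn : (0 : ℚ) ≤ (6 * m + 18) * M1 - (2 * m + 9) * M2 := by
        have h1 : (0:ℚ) ≤ (2 * m ^ 2 + 14 * m + 27) * ((2 * m + 4) * M1 - (6 * m + 3) * M0) := by
          have : (0:ℚ) ≤ (2 * m + 4) * M1 - (6 * m + 3) * M0 := by linarith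
          have hc : (0:ℚ) ≤ 2 * (m:ℚ) ^ 2 + 14 * m + 27 := by positivity
          exact mul_nonneg hc this
        nlinarith [keyid, hrec, h1, p0, hm']
      push_cast
      linarith

lemma ratio_upper (m : ℕ) (hm : 1 ≤ m) :
    (2 * (m : ℚ) + 7) * motzkin (m + 1) ≤ (6 * m + 12) * motzkin m := by
  rcases eq_or_lt_of_le hm with h | h
  · subst h
    rw [motzkin_one, motzkin_two]; norm_num
  · exact (ratio_bounds m (by omega)).2

lemma motzkin_logconvex (m : ℕ) (hm : 1 ≤ m) :
    motzkin (m + 1) ^ 2 ≤ motzkin m * motzkin (m + 2) := by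
  have hrec := motzkin_rec m
  have hU := ratio_upper m hm
  have p0 := motzkin_one_le m
  have p1 := motzkin_one_le (m + 1)
  have hm' : (1 : ℚ) ≤ (m : ℚ) := by exact_mod_cast hm
  set M0 := motzkin m
  set M1 := motzkin (m + 1)
  set M2 := motzkin (m + 2)
  have keyid : ((2:ℚ) * m + 7) ^ 2 * ((m : ℚ) + 4) * (M0 * M2 - M1 ^ 2)
      = (2 * m + 7) ^ 2 * M0 * (((m:ℚ) + 4) * M2 - ((2 * m + 5) * M1 + (3 * m + 3) * M0))
        + ((m:ℚ) + 4) * (2 * m + 7) * (((6:ℚ) * m + 12) * M0 - (2 * m + 7) * M1) * M1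
        + (2 * (m:ℚ) ^ 2 + 12 * m + 13) * (((6:ℚ) * m + 12) * M0 - (2 * m + 7) * M1) * M0
        + (9 * (m:ℚ) - 9) * M0 ^ 2 := by ring
  have hD : (0:ℚ) ≤ (6 * (m:ℚ) + 12) * M0 - (2 * m + 7) * M1 := by linarith
  have hz : ((m:ℚ) + 4) * M2 - ((2 * m + 5) * M1 + (3 * m + 3) * M0) = 0 := by linarith
  rw [hz] at keyid
  have h2 : (0:ℚ) ≤ (2 * (m:ℚ) + 7) ^ 2 * ((m : ℚ) + 4) * (M0 * M2 - M1 ^ 2) := by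
    rw [keyid]
    have t1 : (0:ℚ) ≤ ((m:ℚ) + 4) * (2 * m + 7) *
        ((6 * (m:ℚ) + 12) * M0 - (2 * m + 7) * M1) * M1 :=
      mul_nonneg (mul_nonneg (by positivity) hD) (by linarith)
    have t2 : (0:ℚ) ≤ (2 * (m:ℚ) ^ 2 + 12 * m + 13) *
        ((6 * (m:ℚ) + 12) * M0 - (2 * m + 7) * M1) * M0 :=
      mul_nonneg (mul_nonneg (by positivity) hD) (by linarith)
    have t3 : (0:ℚ) ≤ (9 * (m:ℚ) - 9) * M0 ^ 2 :=
      mul_nonneg (by linarith) (by positivity)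
    nlinarith [t1, t2, t3]
  have hc : (0:ℚ) < (2 * (m:ℚ) + 7) ^ 2 * ((m : ℚ) + 4) := by positivity
  nlinarith [h2, hc]

lemma motzkin_adjacent : ∀ n : ℕ, 1 ≤ n →
    motzkin n ^ (n + 1) < motzkin (n + 1) ^ n := by
  intro n hn
  induction n, hn using Nat.le_induction with
  | base => rw [motzkin_one, motzkin_two]; norm_num
  | succ n hn ih =>
    have lc := motzkin_logconvex n hn
    have p0 : (0:ℚ) < motzkin n := lt_of_lt_of_le one_pos (motzkin_one_le n)
    have p1 : (0:ℚ) < motzkin (n + 1) := lt_of_lt_of_le one_pos (motzkin_one_le (n + 1))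
    have p2 : (0:ℚ) < motzkin (n + 2) := lt_of_lt_of_le one_pos (motzkin_one_le (n + 2))
    have h1 : (motzkin (n + 1) ^ 2) ^ (n + 1) ≤ (motzkin n * motzkin (n + 2)) ^ (n + 1) :=
      pow_le_pow_left₀ (by positivity) lc (n + 1)
    have h2 : motzkin n ^ (n + 1) * motzkin (n + 2) ^ (n + 1)
        < motzkin (n + 1) ^ n * motzkin (n + 2) ^ (n + 1) :=
      mul_lt_mul_of_pos_right ih (by positivity)
    have h3 : motzkin (n + 1) ^ n * motzkin (n + 1) ^ (n + 2)
        < motzkin (n + 1) ^ n * motzkin (n + 2) ^ (n + 1) := by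
      calc motzkin (n + 1) ^ n * motzkin (n + 1) ^ (n + 2)
          = (motzkin (n + 1) ^ 2) ^ (n + 1) := by ring
        _ ≤ (motzkin n * motzkin (n + 2)) ^ (n + 1) := h1
        _ = motzkin n ^ (n + 1) * motzkin (n + 2) ^ (n + 1) := by rw [mul_pow]
        _ < motzkin (n + 1) ^ n * motzkin (n + 2) ^ (n + 1) := h2
    exact lt_of_mul_lt_mul_left h3 (by positivity)

lemma motzkin_real_adjacent (n : ℕ) (hn : 1 ≤ n) :
    ((motzkin n : ℝ)) ^ ((n : ℝ)⁻¹) < ((motzkin (n + 1) : ℝ)) ^ (((n : ℝ) + 1)⁻¹) := by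
  have hx : (0:ℝ) < (motzkin n : ℝ) := by
    have h := motzkin_one_le n
    have h' : (1:ℝ) ≤ (motzkin n : ℝ) := by exact_mod_cast h
    linarith
  have hy : (0:ℝ) < (motzkin (n + 1) : ℝ) := by
    have h := motzkin_one_le (n + 1)
    have h' : (1:ℝ) ≤ (motzkin (n + 1) : ℝ) := by exact_mod_cast h
    linarith
  have hn' : (0:ℝ) < (n : ℝ) := by exact_mod_cast hn
  have hc : (0:ℝ) < ((n : ℝ) * ((n : ℝ) + 1))⁻¹ := by positivity
  have hadj : (motzkin n : ℝ) ^ ((n:ℝ) + 1) < (motzkin (n + 1) : ℝ) ^ (n:ℝ) := by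
    rw [show ((n:ℝ) + 1) = ((n + 1 : ℕ) : ℝ) by push_cast; ring,
      Real.rpow_natCast, Real.rpow_natCast]
    exact_mod_cast motzkin_adjacent n hn
  calc (motzkin n : ℝ) ^ ((n : ℝ)⁻¹)
      = ((motzkin n : ℝ) ^ ((n:ℝ) + 1)) ^ ((n : ℝ) * ((n : ℝ) + 1))⁻¹ := by
        rw [← Real.rpow_mul hx.le]
        congr 1
        field_simp
    _ < ((motzkin (n + 1) : ℝ) ^ (n:ℝ)) ^ ((n : ℝ) * ((n : ℝ) + 1))⁻¹ :=
        Real.rpow_lt_rpow (Real.rpow_nonneg hx.le _) hadj hc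
    _ = (motzkin (n + 1) : ℝ) ^ (((n : ℝ) + 1)⁻¹) := by
        rw [← Real.rpow_mul hy.le]
        congr 1
        field_simp

theorem motzkin_root_eventually_strictMono :
    ∃ n₀ : ℕ, StrictMonoOn (fun n : ℕ => ((motzkin n : ℝ)) ^ ((n : ℝ)⁻¹))
      {n : ℕ | n₀ ≤ n} := by
  refine ⟨1, ?_⟩
  have adj : ∀ n : ℕ, 1 ≤ n →
      ((motzkin n : ℝ)) ^ ((n : ℝ)⁻¹) < ((motzkin (n + 1) : ℝ)) ^ (((n + 1 : ℕ) : ℝ))⁻¹ := by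
    intro n hn
    have := motzkin_real_adjacent n hn
    rwa [show (((n + 1 : ℕ) : ℝ))⁻¹ = ((n : ℝ) + 1)⁻¹ by push_cast; ring]
  intro a ha b hb hab
  simp only [Set.mem_setOf_eq] at ha hb
  have key : ∀ b : ℕ, a + 1 ≤ b →
      ((motzkin a : ℝ)) ^ ((a : ℝ)⁻¹) < ((motzkin b : ℝ)) ^ ((b : ℝ)⁻¹) := by
    intro b hb
    induction b, hb using Nat.le_induction with
    | base => exact adj a ha
    | succ b hb ih => exact lt_trans ih (adj b (by omega))
  exact key b (by omega)
end

section
/- There exists n₀ such that the sequence of Apéry numbers A_n = ∑_{k=0}^n C(n,k)² C(n+k,k)² satisfies: (A_{n+1}^{1/(n+1)} / A_n^{1/n})_{n ≥ n₀} is strictly decreasing. -/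
open Finset

/-- The `n`-th Apéry number `A_n = ∑_{k=0}^{n} C(n,k)² C(n+k,k)²`. -/
def apery (n : ℕ) : ℕ :=
  ∑ k ∈ Finset.range (n + 1), (n.choose k) ^ 2 * ((n + k).choose k) ^ 2

namespace AperyAux

/-- binomial entries as rationals -/
noncomputable def F (a k : ℕ) : ℚ := ((a.choose k : ℚ))^2 * (((a+k).choose k : ℚ))^2

/-- WZ certificate multiplier, with m = n+1 -/
noncomputable def c (n j : ℕ) : ℚ :=
  4*(2*(n:ℚ)+3)*((j:ℚ)*(2*(j:ℚ)+1) - (2*(n:ℚ)+3)^2)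

noncomputable def G (n k : ℕ) : ℚ :=
  if k = 0 then 0 else c n (k-1) * F (n+1) (k-1)

lemma cast_choose_mul (s k : ℕ) (hk : k ≤ s + 1) :
    ((s.choose k : ℚ)) * ((s:ℚ) + 1) = (((s+1).choose k : ℚ)) * ((s:ℚ) + 1 - (k:ℚ)) := by
  have h := Nat.choose_mul_succ_eq s k
  have : (((s.choose k) * (s+1) : ℕ) : ℚ) = ((( (s+1).choose k) * (s + 1 - k) : ℕ) : ℚ) := by
    rw [h]
  push_cast [Nat.cast_sub hk] at this
  linarith [this]

lemma pointwise (n k : ℕ) (hk : k ≤ n + 2) :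
    ((n:ℚ)+2)^3 * F (n+2) k + ((n:ℚ)+1)^3 * F n k
      - (34*((n:ℚ)+1)^3+51*((n:ℚ)+1)^2+27*((n:ℚ)+1)+5) * F (n+1) k
      = G n (k+1) - G n k := by
  rcases Nat.eq_zero_or_pos k with hk0 | hk1
  · subst hk0
    simp only [F, G, c]
    norm_num [Nat.choose_zero_right]
    ring
  · rcases eq_or_lt_of_le hk with hk2 | hk2
    · -- k = n+2
      subst hk2
      have hz1 : (n:ℚ) + 2 ≠ 0 := by positivity
      -- names
      set x : ℚ := ((2*n+2).choose (n+1) : ℚ) with hx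
      set y : ℚ := ((2*n+3).choose (n+1) : ℚ) with hy
      set z : ℚ := ((2*n+4).choose (n+2) : ℚ) with hz
      have h1 : x * (2*(n:ℚ)+3) = y * ((n:ℚ)+2) := by
        have := cast_choose_mul (2*n+2) (n+1) (by omega)
        push_cast at this
        rw [show 2*n+2+1 = 2*n+3 from rfl] at this
        rw [hx, hy]; push_cast; linarith [this]
      have h2 : (2*(n:ℚ)+4) * y = z * ((n:ℚ)+2) := by
        have h := Nat.add_one_mul_choose_eq (2*n+3) (n+1)
        rw [show 2*n+3+1 = 2*n+4 by omega, show n+1+1 = n+2 by omega] at h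
        have h' : (((2*n+4) * ((2*n+3).choose (n+1)) : ℕ) : ℚ)
            = ((((2*n+4).choose (n+2)) * (n+2) : ℕ) : ℚ) := by rw [h]
        push_cast at h'
        rw [hy, hz]; push_cast; linarith [h']
      have hzz : z = (2*(n:ℚ)+4) * (2*(n:ℚ)+3) * x / (((n:ℚ)+2)^2) := by
        rw [eq_div_iff (pow_ne_zero 2 hz1)]
        linear_combination (-(2*(n:ℚ)+4))*h1 - ((n:ℚ)+2)*h2
      -- F values
      have hF1 : F (n+2) (n+2) = z^2 := by
        simp only [F, Nat.choose_self, hz]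
        rw [show (n+2)+(n+2) = 2*n+4 from by omega]
        push_cast; ring
      have hF2 : F n (n+2) = 0 := by
        simp only [F]
        rw [Nat.choose_eq_zero_of_lt (by omega)]
        push_cast; ring
      have hF3 : F (n+1) (n+2) = 0 := by
        simp only [F]
        rw [Nat.choose_eq_zero_of_lt (by omega)]
        push_cast; ring
      have hF4 : F (n+1) (n+1) = x^2 := by
        simp only [F, Nat.choose_self, hx]
        rw [show (n+1)+(n+1) = 2*n+2 from by omega]
        push_cast; ring
      have hG1 : G n (n+2+1) = 0 := by
        simp only [G, if_neg (by omega : n+2+1 ≠ 0)]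
        rw [show n+2+1-1 = n+2 from by omega, hF3]; ring
      have hG2 : G n (n+2) = c n (n+1) * x^2 := by
        simp only [G, if_neg (by omega : n+2 ≠ 0)]
        rw [show n+2-1 = n+1 from by omega, hF4]
      rw [hF1, hF2, hF3, hG1, hG2]
      simp only [c]
      push_cast
      rw [hzz]
      field_simp
      ring
    · -- 1 ≤ k ≤ n+1
      obtain ⟨j, rfl⟩ : ∃ j, k = j + 1 := ⟨k-1, by omega⟩
      have hjn : j ≤ n := by omega
      have hne1 : (n:ℚ) + 1 - (j:ℚ) ≠ 0 := by
        have : (j:ℚ) ≤ (n:ℚ) := by exact_mod_cast hjn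
        linarith
      have hne2 : (n:ℚ) + 1 ≠ 0 := by positivity
      have hne3 : (n:ℚ) + (j:ℚ) + 2 ≠ 0 := by positivity
      have hne4 : (n:ℚ) + 2 ≠ 0 := by positivity
      set b : ℚ := ((n+1).choose (j+1) : ℚ) with hb
      set d : ℚ := ((n+j+2).choose (j+1) : ℚ) with hd
      have A1 : ((n+2).choose (j+1) : ℚ) = b * ((n:ℚ)+2) / ((n:ℚ)+1-(j:ℚ)) := by
        rw [eq_div_iff hne1]
        have := cast_choose_mul (n+1) (j+1) (by omega)
        rw [show (n+1)+1 = n+2 from rfl] at this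
        push_cast at this
        rw [hb]; push_cast; linarith [this]
      have A2 : (n.choose (j+1) : ℚ) = b * ((n:ℚ)-(j:ℚ)) / ((n:ℚ)+1) := by
        rw [eq_div_iff hne2]
        have := cast_choose_mul n (j+1) (by omega)
        push_cast at this
        rw [hb]; push_cast; linarith [this]
      have A3 : ((n+j+1).choose (j+1) : ℚ) = d * ((n:ℚ)+1) / ((n:ℚ)+(j:ℚ)+2) := by
        rw [eq_div_iff hne3]
        have := cast_choose_mul (n+j+1) (j+1) (by omega)
        rw [show (n+j+1)+1 = n+j+2 from rfl] at this
        push_cast at this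
        rw [hd]; push_cast; linarith [this]
      have A4 : ((n+j+3).choose (j+1) : ℚ) = d * ((n:ℚ)+(j:ℚ)+3) / ((n:ℚ)+2) := by
        rw [eq_div_iff hne4]
        have := cast_choose_mul (n+j+2) (j+1) (by omega)
        rw [show (n+j+2)+1 = n+j+3 from rfl] at this
        push_cast at this
        rw [hd]; push_cast; linarith [this]
      have A5 : ((n+1).choose j : ℚ) = b * ((j:ℚ)+1) / ((n:ℚ)+1-(j:ℚ)) := by
        rw [eq_div_iff hne1]
        have h := Nat.choose_succ_right_eq (n+1) j
        have h' : (((n+1).choose (j+1) * (j+1) : ℕ) : ℚ)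
            = (((n+1).choose j * ((n+1) - j) : ℕ) : ℚ) := by rw [h]
        rw [Nat.cast_mul, Nat.cast_mul, Nat.cast_sub (by omega : j ≤ n+1)] at h'
        push_cast at h'
        rw [← hb] at h'
        linarith [h']
      have A6 : ((n+j+1).choose j : ℚ) = d * ((j:ℚ)+1) / ((n:ℚ)+(j:ℚ)+2) := by
        rw [eq_div_iff hne3]
        have h := Nat.add_one_mul_choose_eq (n+j+1) j
        rw [show n+j+1+1 = n+j+2 by omega] at h
        have h' : (((n+j+2) * ((n+j+1).choose j) : ℕ) : ℚ)
            = ((((n+j+2).choose (j+1)) * (j+1) : ℕ) : ℚ) := by rw [h]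
        push_cast at h'
        rw [← hd] at h'
        linarith [h']
      have hG1 : G n (j+1+1) = c n (j+1) * (b^2 * d^2) := by
        simp only [G, if_neg (by omega : j+1+1 ≠ 0)]
        rw [show j+1+1-1 = j+1 from by omega]
        simp only [F]
        rw [show n+1+(j+1) = n+j+2 from by omega, hb, hd]
      have hG2 : G n (j+1) = c n j * (((n+1).choose j : ℚ)^2 * ((n+j+1).choose j : ℚ)^2) := by
        simp only [G, if_neg (by omega : j+1 ≠ 0)]
        rw [show j+1-1 = j from by omega]
        simp only [F]
        rw [show n+1+j = n+j+1 from by omega]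
      rw [hG1, hG2]
      simp only [F]
      rw [show (n+2)+(j+1) = n+j+3 from by omega,
          show n+(j+1) = n+j+1 from by omega,
          show (n+1)+(j+1) = n+j+2 from by omega]
      rw [A1, A2, A3, A4, A5, A6, hb, hd]
      simp only [c]
      push_cast
      field_simp
      ring

lemma F_zero {m k : ℕ} (h : m < k) : F m k = 0 := by
  simp [F, Nat.choose_eq_zero_of_lt h]

lemma apery_cast (a : ℕ) : (apery a : ℚ) = ∑ k ∈ range (a+1), F a k := by
  simp only [apery, Nat.cast_sum, Nat.cast_mul, Nat.cast_pow, F]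

theorem apery_rec (n : ℕ) :
    ((n:ℚ)+2)^3 * apery (n+2) + ((n:ℚ)+1)^3 * apery n
      = (34*((n:ℚ)+1)^3+51*((n:ℚ)+1)^2+27*((n:ℚ)+1)+5) * apery (n+1) := by
  set P : ℚ := 34*((n:ℚ)+1)^3+51*((n:ℚ)+1)^2+27*((n:ℚ)+1)+5 with hP
  have key : ∑ k ∈ range (n+3),
      (((n:ℚ)+2)^3 * F (n+2) k + ((n:ℚ)+1)^3 * F n k - P * F (n+1) k) = 0 := by
    have hcong : ∀ k ∈ range (n+3),
        (((n:ℚ)+2)^3 * F (n+2) k + ((n:ℚ)+1)^3 * F n k - P * F (n+1) k)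
          = G n (k+1) - G n k := by
      intro k hk
      exact pointwise n k (by have := Finset.mem_range.mp hk; omega)
    rw [Finset.sum_congr rfl hcong, Finset.sum_range_sub (G n) (n+3)]
    have h1 : G n (n+3) = 0 := by
      simp only [G, if_neg (by omega : n+3 ≠ 0)]
      rw [show n+3-1 = n+2 from by omega, F_zero (by omega : n+1 < n+2)]
      ring
    have h0 : G n 0 = 0 := by simp [G]
    rw [h1, h0]; ring
  have S2 : ∑ k ∈ range (n+3), F (n+2) k = (apery (n+2) : ℚ) := by
    rw [apery_cast, show n+2+1 = n+3 from by omega]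
  have S1 : ∑ k ∈ range (n+3), F (n+1) k = (apery (n+1) : ℚ) := by
    rw [show n+3 = (n+1+1)+1 from by omega, Finset.sum_range_succ,
      F_zero (by omega : n+1 < n+1+1), apery_cast]
    ring
  have S0 : ∑ k ∈ range (n+3), F n k = (apery n : ℚ) := by
    rw [show n+3 = (n+1)+1+1 from by omega, Finset.sum_range_succ, Finset.sum_range_succ,
      F_zero (by omega : n < n+1), F_zero (by omega : n < n+1+1), apery_cast]
    ring
  rw [Finset.sum_sub_distrib, Finset.sum_add_distrib, ← Finset.mul_sum, ← Finset.mul_sum,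
    ← Finset.mul_sum, S2, S1, S0] at key
  linarith [key]



lemma keyLo (x s : ℝ) (hx : 4 ≤ x) (hs2 : s^2 = 2) (hs : 0 ≤ s) :
    (17+12*s)^2 * (2*x^2-3*x-6) * (2*(x-1)^2-3*(x-1)-6) * (x+1)^3 + 4*x^5*(x-1)^2
      ≤ 2*(17+12*s) * (34*x^3+51*x^2+27*x+5) * x^2 * (2*(x-1)^2-3*(x-1)-6) := by
  have hu : (0:ℝ) ≤ x - 4 := by linarith
  have hE : 2*(17+12*s) * (34*x^3+51*x^2+27*x+5) * x^2 * (2*(x-1)^2-3*(x-1)-6)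
      - ((17+12*s)^2 * (2*x^2-3*x-6) * (2*(x-1)^2-3*(x-1)-6) * (x+1)^3 + 4*x^5*(x-1)^2)
      = (2001246 + 1434960*s) + (7320273 + 5200344*s)*(x-4)
        + (5399166 + 3829512*s)*(x-4)^2 + (1649718 + 1169376*s)*(x-4)^3
        + (230310 + 163200*s)*(x-4)^4 + (12195 + 8640*s)*(x-4)^5 := by
    linear_combination (-(144*(2*x^2-3*x-6)*(2*(x-1)^2-3*(x-1)-6)*(x+1)^3)) * hs2
  nlinarith [pow_nonneg hu 2, pow_nonneg hu 3, pow_nonneg hu 4, pow_nonneg hu 5,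
    mul_nonneg hs hu, mul_nonneg hs (pow_nonneg hu 2), mul_nonneg hs (pow_nonneg hu 3),
    mul_nonneg hs (pow_nonneg hu 4), mul_nonneg hs (pow_nonneg hu 5), hE, hs]

lemma keyHi (x s : ℝ) (hx : 4 ≤ x) (hs2 : s^2 = 2) (hs : 0 ≤ s) :
    2*(17+12*s) * (34*x^3+51*x^2+27*x+5) * x^2 * (2*(x-1)^2-3*(x-1)+6)
      ≤ (17+12*s)^2 * (2*x^2-3*x+6) * (2*(x-1)^2-3*(x-1)+6) * (x+1)^3 + 4*x^5*(x-1)^2 := by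
  have hu : (0:ℝ) ≤ x - 4 := by linarith
  have hE : (17+12*s)^2 * (2*x^2-3*x+6) * (2*(x-1)^2-3*(x-1)+6) * (x+1)^3 + 4*x^5*(x-1)^2
      - 2*(17+12*s) * (34*x^3+51*x^2+27*x+5) * x^2 * (2*(x-1)^2-3*(x-1)+6)
      = (2828814 + 2005200*s) + (3152331 + 2233800*s)*(x-4)
        + (1489494 + 1054968*s)*(x-4)^2 + (349734 + 247584*s)*(x-4)^3
        + (39210 + 27744*s)*(x-4)^4 + (1629 + 1152*s)*(x-4)^5 := by
    linear_combination (144*(2*x^2-3*x+6)*(2*(x-1)^2-3*(x-1)+6)*(x+1)^3) * hs2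
  nlinarith [pow_nonneg hu 2, pow_nonneg hu 3, pow_nonneg hu 4, pow_nonneg hu 5,
    mul_nonneg hs hu, mul_nonneg hs (pow_nonneg hu 2), mul_nonneg hs (pow_nonneg hu 3),
    mul_nonneg hs (pow_nonneg hu 4), mul_nonneg hs (pow_nonneg hu 5), hE, hs]


-- Part 3 : ratio interval bounds (to be appended inside namespace AperyAux)
noncomputable def aR (n : ℕ) : ℝ := (apery n : ℝ)

lemma apery_one_le (n : ℕ) : 1 ≤ apery n := by
  have h0 : (0:ℕ) ∈ Finset.range (n+1) := Finset.mem_range.mpr (by omega)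
  have := Finset.single_le_sum (f := fun k => (n.choose k) ^ 2 * ((n + k).choose k) ^ 2)
    (fun i _ => Nat.zero_le _) h0
  simpa [apery] using this

lemma aR_pos (n : ℕ) : 0 < aR n := by
  have := apery_one_le n
  have : (1:ℝ) ≤ (apery n : ℝ) := by exact_mod_cast this
  unfold aR; linarith

lemma recR (n : ℕ) :
    ((n:ℝ)+2)^3 * aR (n+2) + ((n:ℝ)+1)^3 * aR n
      = (34*((n:ℝ)+1)^3+51*((n:ℝ)+1)^2+27*((n:ℝ)+1)+5) * aR (n+1) := by
  have h := congrArg (fun q : ℚ => (q:ℝ)) (apery_rec n)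
  push_cast at h
  unfold aR
  push_cast
  linarith [h]

lemma sqrt2_sq : (Real.sqrt 2)^2 = 2 := Real.sq_sqrt (by norm_num)
lemma sqrt2_nonneg : 0 ≤ Real.sqrt 2 := Real.sqrt_nonneg 2
lemma sqrt2_lb : (1.41:ℝ) ≤ Real.sqrt 2 := by
  nlinarith [sqrt2_sq, sqrt2_nonneg]
lemma sqrt2_ub : Real.sqrt 2 ≤ 1.42 := by
  nlinarith [sqrt2_sq, sqrt2_nonneg]

lemma apery3 : apery 3 = 1445 := by decide
lemma apery4 : apery 4 = 33001 := by decide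

lemma rho_bounds : ∀ n : ℕ, 3 ≤ n →
    (17+12*Real.sqrt 2) * (2*(n:ℝ)^2-3*(n:ℝ)-6) * aR n ≤ 2*(n:ℝ)^2 * aR (n+1) ∧
    2*(n:ℝ)^2 * aR (n+1) ≤ (17+12*Real.sqrt 2) * (2*(n:ℝ)^2-3*(n:ℝ)+6) * aR n := by
  intro n hn
  induction n, hn using Nat.le_induction with
  | base =>
      have h3 : aR 3 = 1445 := by unfold aR; rw [apery3]; norm_num
      have h4 : aR 4 = 33001 := by unfold aR; rw [apery4]; norm_num
      rw [show ((3:ℕ):ℝ) = 3 by norm_num, show (3:ℕ)+1 = 4 from rfl, h3, h4]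
      constructor
      · nlinarith [sqrt2_ub]
      · nlinarith [sqrt2_lb]
  | succ n hn IH =>
      obtain ⟨IHlo, IHhi⟩ := IH
      have hs2 : (Real.sqrt 2)^2 = 2 := sqrt2_sq
      have hs : (0:ℝ) ≤ Real.sqrt 2 := sqrt2_nonneg
      have hX3 : (3:ℝ) ≤ (n:ℝ) := by exact_mod_cast hn
      have hA : 0 < aR n := aR_pos n
      have hB : 0 < aR (n+1) := aR_pos (n+1)
      have hC : 0 < aR (n+2) := aR_pos (n+2)
      have halpha : 0 < 17+12*Real.sqrt 2 := by nlinarith [sqrt2_lb]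
      have hLn : 0 < 2*(n:ℝ)^2-3*(n:ℝ)-6 := by nlinarith
      have hUn : 0 < 2*(n:ℝ)^2-3*(n:ℝ)+6 := by nlinarith
      have hrec : ((n:ℝ)+2)^3 * aR (n+2) + ((n:ℝ)+1)^3 * aR n
          = (34*((n:ℝ)+1)^3+51*((n:ℝ)+1)^2+27*((n:ℝ)+1)+5) * aR (n+1) := recR n
      have hM : 0 < (17+12*Real.sqrt 2) * (2*(n:ℝ)^2-3*(n:ℝ)-6) * ((n:ℝ)+2)^3 := by positivity
      have hMU : 0 < (17+12*Real.sqrt 2) * (2*(n:ℝ)^2-3*(n:ℝ)+6) * ((n:ℝ)+2)^3 := by positivity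
      constructor
      · -- lower bound at n+1
        push_cast
        rw [show n+1+1 = n+2 by omega, ← mul_le_mul_iff_of_pos_right hM]
        have h3 := keyLo ((n:ℝ)+1) (Real.sqrt 2) (by linarith) hs2 hs
        have h3B := mul_le_mul_of_nonneg_right h3 (le_of_lt hB)
        have h1 : 2*((n:ℝ)+1)^5 * ((17+12*Real.sqrt 2) * (2*(n:ℝ)^2-3*(n:ℝ)-6) * aR n)
            ≤ 2*((n:ℝ)+1)^5 * (2*(n:ℝ)^2 * aR (n+1)) :=
          mul_le_mul_of_nonneg_left IHlo (by positivity)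
        have h2 : (17+12*Real.sqrt 2)*(2*(n:ℝ)^2-3*(n:ℝ)-6)*((n:ℝ)+1)^2 * (((n:ℝ)+2)^3 * aR (n+2))
            = (17+12*Real.sqrt 2)*(2*(n:ℝ)^2-3*(n:ℝ)-6)*((n:ℝ)+1)^2 *
              ((34*((n:ℝ)+1)^3+51*((n:ℝ)+1)^2+27*((n:ℝ)+1)+5) * aR (n+1) - ((n:ℝ)+1)^3 * aR n) := by
          linear_combination ((17+12*Real.sqrt 2)*(2*(n:ℝ)^2-3*(n:ℝ)-6)*((n:ℝ)+1)^2) * hrec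
        set α : ℝ := 17+12*Real.sqrt 2 with halphadef
        linarith [h1, h2, h3B]
      · -- upper bound at n+1
        push_cast
        rw [show n+1+1 = n+2 by omega, ← mul_le_mul_iff_of_pos_right hMU]
        have h3 := keyHi ((n:ℝ)+1) (Real.sqrt 2) (by linarith) hs2 hs
        have h3B := mul_le_mul_of_nonneg_right h3 (le_of_lt hB)
        have h1 : 2*((n:ℝ)+1)^5 * (2*(n:ℝ)^2 * aR (n+1))
            ≤ 2*((n:ℝ)+1)^5 * ((17+12*Real.sqrt 2) * (2*(n:ℝ)^2-3*(n:ℝ)+6) * aR n) :=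
          mul_le_mul_of_nonneg_left IHhi (by positivity)
        have h2 : (17+12*Real.sqrt 2)*(2*(n:ℝ)^2-3*(n:ℝ)+6)*((n:ℝ)+1)^2 * (((n:ℝ)+2)^3 * aR (n+2))
            = (17+12*Real.sqrt 2)*(2*(n:ℝ)^2-3*(n:ℝ)+6)*((n:ℝ)+1)^2 *
              ((34*((n:ℝ)+1)^3+51*((n:ℝ)+1)^2+27*((n:ℝ)+1)+5) * aR (n+1) - ((n:ℝ)+1)^3 * aR n) := by
          linear_combination ((17+12*Real.sqrt 2)*(2*(n:ℝ)^2-3*(n:ℝ)+6)*((n:ℝ)+1)^2) * hrec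
        set α : ℝ := 17+12*Real.sqrt 2 with halphadef
        linarith [h1, h2, h3B]

-- Part 4: log-ratio estimates and the final assembly
lemma apery0 : apery 0 = 1 := by decide
lemma apery1 : apery 1 = 5 := by decide

noncomputable def Lg (n : ℕ) : ℝ := Real.log (aR n)
noncomputable def sl (n : ℕ) : ℝ := Lg (n+1) - Lg n
noncomputable def Tq (n : ℕ) : ℝ := (n:ℝ) * sl n - Lg n

lemma Lg_zero : Lg 0 = 0 := by
  unfold Lg aR; rw [apery0]; norm_num

lemma Lg_eq_sum (n : ℕ) : Lg n = ∑ k ∈ range n, sl k := by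
  have h := Finset.sum_range_sub Lg n
  unfold sl
  rw [h, Lg_zero, sub_zero]

lemma Tq_eq_sum (n : ℕ) : Tq n = ∑ k ∈ range n, (sl n - sl k) := by
  rw [Finset.sum_sub_distrib, Finset.sum_const, Finset.card_range, ← Lg_eq_sum]
  unfold Tq
  rw [nsmul_eq_mul]

lemma one_sub_inv_le_log {x : ℝ} (hx : 0 < x) : 1 - 1/x ≤ Real.log x := by
  have h := Real.log_le_sub_one_of_pos (inv_pos.mpr hx)
  rw [Real.log_inv] at h
  have : 1/x = x⁻¹ := one_div x
  linarith

lemma sl_eq_log_div (n : ℕ) : sl n = Real.log (aR (n+1) / aR n) := by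
  rw [Real.log_div (ne_of_gt (aR_pos (n+1))) (ne_of_gt (aR_pos n))]; rfl

lemma alpha_pos : (0:ℝ) < 17+12*Real.sqrt 2 := by nlinarith [sqrt2_lb]

lemma sl_upper (n : ℕ) (hn : 12 ≤ n) :
    sl n ≤ Real.log (17+12*Real.sqrt 2) - 3/(2*(n:ℝ)) + 3/(n:ℝ)^2 := by
  have hX : (12:ℝ) ≤ (n:ℝ) := by exact_mod_cast hn
  have hb := (rho_bounds n (by omega)).2
  have hU : (0:ℝ) < 2*(n:ℝ)^2-3*(n:ℝ)+6 := by nlinarith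
  have hq : (0:ℝ) < (2*(n:ℝ)^2-3*(n:ℝ)+6)/(2*(n:ℝ)^2) := by positivity
  have h2n : (0:ℝ) < 2*(n:ℝ)^2 := by positivity
  have hdiv : aR (n+1) / aR n ≤ (17+12*Real.sqrt 2) * ((2*(n:ℝ)^2-3*(n:ℝ)+6)/(2*(n:ℝ)^2)) := by
    rw [div_le_iff₀ (aR_pos n), ← mul_le_mul_iff_of_pos_right h2n]
    have e : (17+12*Real.sqrt 2) * ((2*(n:ℝ)^2-3*(n:ℝ)+6)/(2*(n:ℝ)^2)) * aR n * (2*(n:ℝ)^2)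
        = (17+12*Real.sqrt 2) * (2*(n:ℝ)^2-3*(n:ℝ)+6) * aR n := by
      field_simp
    rw [e]
    nlinarith [hb]
  rw [sl_eq_log_div]
  have h1 := Real.log_le_log (div_pos (aR_pos (n+1)) (aR_pos n)) hdiv
  rw [Real.log_mul (ne_of_gt alpha_pos) (ne_of_gt hq)] at h1
  have h2 := Real.log_le_sub_one_of_pos hq
  have h3 : (2*(n:ℝ)^2-3*(n:ℝ)+6)/(2*(n:ℝ)^2) - 1 = -(3/(2*(n:ℝ))) + 3/(n:ℝ)^2 := by
    field_simp
    ring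
  linarith

lemma sl_lower (n : ℕ) (hn : 12 ≤ n) :
    Real.log (17+12*Real.sqrt 2) - 4/(n:ℝ) ≤ sl n := by
  have hX : (12:ℝ) ≤ (n:ℝ) := by exact_mod_cast hn
  have hb := (rho_bounds n (by omega)).1
  have hL : (0:ℝ) < 2*(n:ℝ)^2-3*(n:ℝ)-6 := by nlinarith
  have hq : (0:ℝ) < (2*(n:ℝ)^2-3*(n:ℝ)-6)/(2*(n:ℝ)^2) := by positivity
  have h2n : (0:ℝ) < 2*(n:ℝ)^2 := by positivity
  have hdiv : (17+12*Real.sqrt 2) * ((2*(n:ℝ)^2-3*(n:ℝ)-6)/(2*(n:ℝ)^2)) ≤ aR (n+1) / aR n := by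
    rw [le_div_iff₀ (aR_pos n), ← mul_le_mul_iff_of_pos_right h2n]
    have e : (17+12*Real.sqrt 2) * ((2*(n:ℝ)^2-3*(n:ℝ)-6)/(2*(n:ℝ)^2)) * aR n * (2*(n:ℝ)^2)
        = (17+12*Real.sqrt 2) * (2*(n:ℝ)^2-3*(n:ℝ)-6) * aR n := by
      field_simp
    rw [e]
    nlinarith [hb]
  rw [sl_eq_log_div]
  have h1 := Real.log_le_log (mul_pos alpha_pos hq) hdiv
  rw [Real.log_mul (ne_of_gt alpha_pos) (ne_of_gt hq)] at h1
  have h2 := one_sub_inv_le_log hq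
  have h3 : 1 - 1/((2*(n:ℝ)^2-3*(n:ℝ)-6)/(2*(n:ℝ)^2)) ≥ -(4/(n:ℝ)) := by
    rw [one_div_div, ge_iff_le, neg_le, neg_sub]
    rw [div_sub' (ne_of_gt hL), div_le_div_iff₀ hL (by positivity : (0:ℝ) < (n:ℝ))]
    nlinarith
  linarith

lemma rho34 (n : ℕ) : aR (n+1) ≤ 34 * aR n := by
  cases n with
  | zero =>
      have h0 : aR 0 = 1 := by unfold aR; rw [apery0]; norm_num
      have h1 : aR 1 = 5 := by unfold aR; rw [apery1]; norm_num
      rw [h0, h1]; norm_num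
  | succ k =>
      have hrec := recR k
      have hA := aR_pos k
      have hB := aR_pos (k+1)
      have hC := aR_pos (k+2)
      have hk : (0:ℝ) ≤ (k:ℝ) := Nat.cast_nonneg k
      have hP : 34*((k:ℝ)+1)^3+51*((k:ℝ)+1)^2+27*((k:ℝ)+1)+5 ≤ 34*((k:ℝ)+2)^3 := by nlinarith
      have h2 : (34*((k:ℝ)+1)^3+51*((k:ℝ)+1)^2+27*((k:ℝ)+1)+5) * aR (k+1)
          ≤ 34*((k:ℝ)+2)^3 * aR (k+1) := by nlinarith
      have h3 : ((k:ℝ)+2)^3 * aR (k+2) ≤ ((k:ℝ)+2)^3 * (34 * aR (k+1)) := by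
        nlinarith [mul_pos (show (0:ℝ) < ((k:ℝ)+1)^3 by positivity) hA]
      have h4 : (0:ℝ) < ((k:ℝ)+2)^3 := by positivity
      have := le_of_mul_le_mul_left h3 h4
      rw [show k+1+1 = k+2 by omega]
      exact this

lemma sl_le_log34 (n : ℕ) : sl n ≤ Real.log 34 := by
  rw [sl_eq_log_div]
  apply Real.log_le_log (div_pos (aR_pos (n+1)) (aR_pos n))
  rw [div_le_iff₀ (aR_pos n)]
  have := rho34 n
  linarith [rho34 n]

lemma log34_near (h : True) : Real.log 34 - Real.log (17+12*Real.sqrt 2) ≤ 1/6 := by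
  have hα := alpha_pos
  have h1 : Real.log 34 - Real.log (17+12*Real.sqrt 2) = Real.log (34/(17+12*Real.sqrt 2)) := by
    rw [Real.log_div (by norm_num) (ne_of_gt hα)]
  have h2 := Real.log_le_sub_one_of_pos (show (0:ℝ) < 34/(17+12*Real.sqrt 2) by positivity)
  have h3 : 34/(17+12*Real.sqrt 2) - 1 ≤ 1/6 := by
    rw [div_sub' (ne_of_gt hα), div_le_div_iff₀ hα (by norm_num : (0:ℝ) < 6)]
    nlinarith [sqrt2_lb]
  linarith

lemma sl_diff_small (n k : ℕ) (hn : 12 ≤ n) (hk : k < 12) : -(1/2:ℝ) ≤ sl n - sl k := by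
  have h1 := sl_lower n hn
  have h2 := sl_le_log34 k
  have h3 := log34_near trivial
  have hX : (12:ℝ) ≤ (n:ℝ) := by exact_mod_cast hn
  have h4 : 4/(n:ℝ) ≤ 1/3 := by
    rw [div_le_div_iff₀ (by linarith : (0:ℝ) < (n:ℝ)) (by norm_num : (0:ℝ) < 3)]
    linarith
  linarith

-- Part 5: step bound, harmonic estimates, T bound
lemma slstep (n : ℕ) (hn : 12 ≤ n) :
    (n:ℝ)*((n:ℝ)+1)*(sl (n+1) - sl n) ≤ 10 := by
  have hX : (12:ℝ) ≤ (n:ℝ) := by exact_mod_cast hn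
  have hs := sqrt2_lb
  have hα := alpha_pos
  have hbU := (rho_bounds (n+1) (by omega)).2
  rw [show n+1+1 = n+2 by omega] at hbU
  push_cast at hbU
  have hbL := (rho_bounds n (by omega)).1
  have hL : (0:ℝ) < 2*(n:ℝ)^2-3*(n:ℝ)-6 := by nlinarith
  have hU1 : (0:ℝ) < 2*((n:ℝ)+1)^2-3*((n:ℝ)+1)+6 := by nlinarith
  have h2n : (0:ℝ) < 2*(n:ℝ)^2 := by positivity
  have h2n1 : (0:ℝ) < 2*((n:ℝ)+1)^2 := by positivity
  set A1 : ℝ := (17+12*Real.sqrt 2) * ((2*((n:ℝ)+1)^2-3*((n:ℝ)+1)+6)/(2*((n:ℝ)+1)^2)) with hA1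
  set B0 : ℝ := (17+12*Real.sqrt 2) * ((2*(n:ℝ)^2-3*(n:ℝ)-6)/(2*(n:ℝ)^2)) with hB0
  have hA1pos : 0 < A1 := by rw [hA1]; positivity
  have hB0pos : 0 < B0 := by rw [hB0]; positivity
  have hq1 : aR (n+2) / aR (n+1) ≤ A1 := by
    rw [div_le_iff₀ (aR_pos (n+1)), ← mul_le_mul_iff_of_pos_right h2n1]
    have e : A1 * aR (n+1) * (2*((n:ℝ)+1)^2)
        = (17+12*Real.sqrt 2) * (2*((n:ℝ)+1)^2-3*((n:ℝ)+1)+6) * aR (n+1) := by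
      rw [hA1]; field_simp
    rw [e]; nlinarith [hbU]
  have hq2 : B0 ≤ aR (n+1) / aR n := by
    rw [le_div_iff₀ (aR_pos n), ← mul_le_mul_iff_of_pos_right h2n]
    have e : B0 * aR n * (2*(n:ℝ)^2)
        = (17+12*Real.sqrt 2) * (2*(n:ℝ)^2-3*(n:ℝ)-6) * aR n := by
      rw [hB0]; field_simp
    rw [e]; nlinarith [hbL]
  have hd1 : sl (n+1) ≤ Real.log A1 := by
    rw [sl_eq_log_div, show n+1+1 = n+2 by omega]
    exact Real.log_le_log (div_pos (aR_pos (n+2)) (aR_pos (n+1))) hq1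
  have hd2 : Real.log B0 ≤ sl n := by
    rw [sl_eq_log_div]
    exact Real.log_le_log hB0pos hq2
  have hlog : Real.log A1 - Real.log B0 ≤ A1/B0 - 1 := by
    rw [← Real.log_div (ne_of_gt hA1pos) (ne_of_gt hB0pos)]
    exact Real.log_le_sub_one_of_pos (div_pos hA1pos hB0pos)
  have hval : A1/B0 - 1 ≤ 10/((n:ℝ)*((n:ℝ)+1)) := by
    have e : A1/B0 = ((2*((n:ℝ)+1)^2-3*((n:ℝ)+1)+6)*(n:ℝ)^2)
        /((2*(n:ℝ)^2-3*(n:ℝ)-6)*((n:ℝ)+1)^2) := by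
      rw [hA1, hB0]
      field_simp
    have hD : (0:ℝ) < (2*(n:ℝ)^2-3*(n:ℝ)-6)*((n:ℝ)+1)^2 := by positivity
    have e2 : A1/B0 - 1 = ((2*((n:ℝ)+1)^2-3*((n:ℝ)+1)+6)*(n:ℝ)^2
        - (2*(n:ℝ)^2-3*(n:ℝ)-6)*((n:ℝ)+1)^2)/((2*(n:ℝ)^2-3*(n:ℝ)-6)*((n:ℝ)+1)^2) := by
      rw [e]
      rw [div_sub_one (ne_of_gt hD)]
    rw [e2, div_le_div_iff₀ hD (by positivity : (0:ℝ) < (n:ℝ)*((n:ℝ)+1))]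
    nlinarith
  have hd : sl (n+1) - sl n ≤ 10/((n:ℝ)*((n:ℝ)+1)) := by linarith
  have hpos : (0:ℝ) ≤ (n:ℝ)*((n:ℝ)+1) := by positivity
  have := mul_le_mul_of_nonneg_left hd hpos
  have e3 : (n:ℝ)*((n:ℝ)+1) * (10/((n:ℝ)*((n:ℝ)+1))) = 10 := by
    field_simp
  linarith [this, e3.le, e3.ge]

lemma harmonic_lower : ∀ n : ℕ, 12 ≤ n →
    Real.log (n:ℝ) - Real.log 12 ≤ ∑ k ∈ Finset.Ico 12 n, 1/(k:ℝ) := by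
  intro n hn
  induction n, hn using Nat.le_induction with
  | base => norm_num
  | succ n hn IH =>
      rw [Finset.sum_Ico_succ_top hn]
      have hX : (12:ℝ) ≤ (n:ℝ) := by exact_mod_cast hn
      have hlog : Real.log ((n:ℝ)+1) - Real.log (n:ℝ) ≤ 1/(n:ℝ) := by
        rw [← Real.log_div (by linarith) (by linarith)]
        have h2 := Real.log_le_sub_one_of_pos (show (0:ℝ) < ((n:ℝ)+1)/(n:ℝ) by positivity)
        have e : ((n:ℝ)+1)/(n:ℝ) - 1 = 1/(n:ℝ) := by field_simp; ring
        linarith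
      push_cast
      linarith [IH]

lemma sqsum_upper : ∀ n : ℕ, 12 ≤ n →
    ∑ k ∈ Finset.Ico 12 n, 1/(k:ℝ)^2 ≤ 1/11 - 1/((n:ℝ)-1) := by
  intro n hn
  induction n, hn using Nat.le_induction with
  | base => norm_num
  | succ n hn IH =>
      rw [Finset.sum_Ico_succ_top hn]
      have hX : (12:ℝ) ≤ (n:ℝ) := by exact_mod_cast hn
      have key : 1/(n:ℝ)^2 ≤ 1/((n:ℝ)-1) - 1/(n:ℝ) := by
        have e : 1/((n:ℝ)-1) - 1/(n:ℝ) = 1/(((n:ℝ)-1)*(n:ℝ)) := by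
          have h1 : ((n:ℝ)-1) ≠ 0 := by nlinarith
          have h2 : (n:ℝ) ≠ 0 := by nlinarith
          field_simp
          ring
        rw [e]
        apply one_div_le_one_div_of_le (by nlinarith)
        nlinarith
      push_cast
      have e2 : ((n:ℝ)+1)-1 = (n:ℝ) := by ring
      rw [e2]
      linarith [IH]

lemma log12_le_3 : Real.log 12 ≤ 3 := by
  rw [Real.log_le_iff_le_exp (by norm_num)]
  have h := Real.exp_one_gt_d9
  have e3 : Real.exp 3 = Real.exp 1 * Real.exp 1 * Real.exp 1 := by
    rw [← Real.exp_add, ← Real.exp_add]; norm_num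
  nlinarith

lemma log10_ge_2 : (2:ℝ) ≤ Real.log 10 := by
  rw [Real.le_log_iff_exp_le (by norm_num)]
  have h := Real.exp_one_lt_d9
  have e2 : Real.exp 2 = Real.exp 1 * Real.exp 1 := by rw [← Real.exp_add]; norm_num
  nlinarith [Real.exp_pos 1]

lemma Tlow (n : ℕ) (hn : 12 ≤ n) : 3/2*Real.log (n:ℝ) - 15 ≤ Tq n := by
  have hX : (12:ℝ) ≤ (n:ℝ) := by exact_mod_cast hn
  rw [Tq_eq_sum, Finset.range_eq_Ico, ← Finset.sum_Ico_consecutive _ (Nat.zero_le 12) hn]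
  have hfirst : (-6:ℝ) ≤ ∑ k ∈ Finset.Ico 0 12, (sl n - sl k) := by
    have hgoal : ∑ k ∈ Finset.Ico 0 12, (sl n - sl k)
        = 12*sl n - ∑ k ∈ Finset.range 12, sl k := by
      rw [← Finset.range_eq_Ico, Finset.sum_sub_distrib, Finset.sum_const, Finset.card_range,
        nsmul_eq_mul]
      norm_num
    have h := Finset.sum_le_card_nsmul (Finset.range 12) sl (sl n + 1/2)
      (fun k hk => by
        have := sl_diff_small n k hn (Finset.mem_range.mp hk)
        linarith)
    rw [Finset.card_range, nsmul_eq_mul] at h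
    push_cast at h
    rw [hgoal]
    linarith
  have hsecond : ∑ k ∈ Finset.Ico 12 n, (3/2*(1/(k:ℝ)) - 3*(1/(k:ℝ)^2) - 4/(n:ℝ))
      ≤ ∑ k ∈ Finset.Ico 12 n, (sl n - sl k) := by
    apply Finset.sum_le_sum
    intro k hk
    obtain ⟨hk1, hk2⟩ := Finset.mem_Ico.mp hk
    have hK : (12:ℝ) ≤ (k:ℝ) := by exact_mod_cast hk1
    have h1 := sl_lower n hn
    have h2 := sl_upper k hk1
    have e1 : 3/(2*(k:ℝ)) = 3/2*(1/(k:ℝ)) := by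
      field_simp
    have e2 : 3/(k:ℝ)^2 = 3*(1/(k:ℝ)^2) := by
      field_simp
    linarith
  have hsplit : ∑ k ∈ Finset.Ico 12 n, (3/2*(1/(k:ℝ)) - 3*(1/(k:ℝ)^2) - 4/(n:ℝ))
      = 3/2 * (∑ k ∈ Finset.Ico 12 n, 1/(k:ℝ)) - 3 * (∑ k ∈ Finset.Ico 12 n, 1/(k:ℝ)^2)
        - ((n - 12 : ℕ):ℝ) * (4/(n:ℝ)) := by
    rw [Finset.sum_sub_distrib, Finset.sum_sub_distrib, Finset.sum_const, Nat.card_Ico,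
      nsmul_eq_mul, ← Finset.mul_sum, ← Finset.mul_sum]
  have hH := harmonic_lower n hn
  have hS := sqsum_upper n hn
  have hcard : ((n - 12 : ℕ):ℝ) * (4/(n:ℝ)) ≤ 4 := by
    have h1 : ((n - 12 : ℕ):ℝ) ≤ (n:ℝ) := by exact_mod_cast Nat.sub_le n 12
    have h2 : (0:ℝ) ≤ 4/(n:ℝ) := by positivity
    calc ((n - 12 : ℕ):ℝ) * (4/(n:ℝ)) ≤ (n:ℝ) * (4/(n:ℝ)) := mul_le_mul_of_nonneg_right h1 h2
    _ = 4 := by field_simp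
  have hinv : (0:ℝ) ≤ 1/((n:ℝ)-1) :=
    le_of_lt (one_div_pos.mpr (by linarith : (0:ℝ) < (n:ℝ)-1))
  linarith [hfirst, hsecond, hsplit, hH, hS, hcard, log12_le_3]

-- Part 6: final assembly
lemma exp_form (m : ℕ) (hm : 1 ≤ m) :
    ((apery (m+1) : ℝ)) ^ (((m:ℝ) + 1)⁻¹) / ((apery m : ℝ)) ^ ((m:ℝ)⁻¹)
      = Real.exp (Tq m / ((m:ℝ)*((m:ℝ)+1))) := by
  have hm' : (0:ℝ) < (m:ℝ) := by exact_mod_cast hm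
  have e1 : ((apery (m+1) : ℕ) : ℝ) = aR (m+1) := rfl
  have e2 : ((apery m : ℕ) : ℝ) = aR m := rfl
  rw [e1, e2, Real.rpow_def_of_pos (aR_pos (m+1)), Real.rpow_def_of_pos (aR_pos m),
    ← Real.exp_sub]
  congr 1
  have hTq : Tq m = (m:ℝ)*Lg (m+1) - ((m:ℝ)+1)*Lg m := by
    unfold Tq sl; ring
  have hL1 : Real.log (aR (m+1)) = Lg (m+1) := rfl
  have hL0 : Real.log (aR m) = Lg m := rfl
  rw [hL1, hL0, hTq]
  field_simp

lemma succ_step (n : ℕ) (hn : 10^7 ≤ n) :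
    ((apery (n+1+1) : ℝ)) ^ ((((n+1:ℕ):ℝ) + 1)⁻¹) / ((apery (n+1) : ℝ)) ^ (((n+1:ℕ):ℝ)⁻¹)
      < ((apery (n+1) : ℝ)) ^ (((n:ℝ) + 1)⁻¹) / ((apery n : ℝ)) ^ ((n:ℝ)⁻¹) := by
  have h12 : 12 ≤ n := by omega
  have hX : (12:ℝ) ≤ (n:ℝ) := by exact_mod_cast h12
  rw [exp_form (n+1) (by omega), exp_form n (by omega)]
  apply Real.exp_lt_exp.mpr
  push_cast
  rw [div_lt_div_iff₀ (by nlinarith) (by nlinarith)]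
  -- T n ≥ 6
  have hT : (6:ℝ) ≤ Tq n := by
    have hc : ((10:ℝ)^7) ≤ (n:ℝ) := by exact_mod_cast hn
    have hl := Real.log_le_log (by positivity : (0:ℝ) < (10:ℝ)^7) hc
    rw [Real.log_pow] at hl
    push_cast at hl
    have := Tlow n h12
    linarith [log10_ge_2]
  have hA := slstep n h12
  have hTrecX : (n:ℝ)*Tq (n+1) = (n:ℝ)*Tq n + (n:ℝ)*(((n:ℝ)+1)*(sl (n+1) - sl n)) := by
    unfold Tq sl
    push_cast
    ring
  have h5 : (n:ℝ)*Tq (n+1) < ((n:ℝ)+2)*Tq n := by nlinarith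
  nlinarith [mul_lt_mul_of_pos_left h5 (show (0:ℝ) < (n:ℝ)+1 by linarith)]

lemma strictAntiOn_nat {f : ℕ → ℝ} {N : ℕ} (h : ∀ n, N ≤ n → f (n+1) < f n) :
    StrictAntiOn f {n | N ≤ n} := by
  intro x hx y hy hxy
  simp only [Set.mem_setOf_eq] at hx hy
  obtain ⟨d, rfl⟩ : ∃ d, y = x + 1 + d := ⟨y - (x+1), by omega⟩
  clear hy hxy
  induction d with
  | zero => exact h x hx
  | succ d ih =>
      have hstep : f (x+1+(d+1)) < f (x+1+d) := by
        rw [show x+1+(d+1) = (x+1+d)+1 by omega]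
        exact h (x+1+d) (by omega)
      exact lt_trans hstep ih

end AperyAux

theorem apery_root_ratio_eventually_strictAnti :
    ∃ n₀ : ℕ,
      StrictAntiOn
        (fun n : ℕ =>
          ((apery (n + 1) : ℝ)) ^ (((n : ℝ) + 1)⁻¹) /
            ((apery n : ℝ)) ^ ((n : ℝ)⁻¹))
        {n : ℕ | n₀ ≤ n} := by
  refine ⟨10^7, AperyAux.strictAntiOn_nat ?_⟩
  intro n hn
  exact AperyAux.succ_step n hn
end
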